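/- arXiv:1405.7950 — 11 statements merged into one kernel-verified Lean document; each statement's English description precedes it below -/
import Mathlib

section
/- Let b be a non-degenerate symmetric bilinear form on a finite abelian p-group G with values in ℚ/ℤ. Then for every g ∈ G, the order of g equals the maximum over h ∈ G of the order of b(g,h) in ℚ/ℤ. -/
open Classical

theorem stmt2 {G : Type*} [AddCommGroup G] [Fintype G] (p : ℕ) (hp : p.Prime)
    (hG : ∀ x : G, ∃ n : ℕ, p ^ n • x = 0)
    (b : G → G → AddCircle (1 : ℚ))
    (hsymm : ∀ g h : G, b g h = b h g)
    (hadd : ∀ g h h' : G, b g (h + h') = b g h + b g h')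
    (hnd : ∀ g : G, (∀ h : G, b g h = 0) → g = 0)
    (g : G) :
    addOrderOf g = Finset.univ.sup (fun h : G => addOrderOf (b g h)) := by
  have hhom : ∀ x : G, ∀ n : ℕ, ∀ y : G, b x (n • y) = n • b x y := by
    intro x n y
    exact (AddMonoidHom.mk' (b x) (hadd x)).map_nsmul n y
  have hzero : ∀ x : G, b x 0 = 0 := fun x =>
    (AddMonoidHom.mk' (b x) (hadd x)).map_zero
  have hdvd : ∀ h : G, addOrderOf (b g h) ∣ addOrderOf g := by
    intro h
    apply addOrderOf_dvd_of_nsmul_eq_zero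
    have : addOrderOf g • b g h = b h (addOrderOf g • g) := by
      rw [hhom h _ g, hsymm]
    rw [this, addOrderOf_nsmul_eq_zero g, hzero h]
  refine le_antisymm ?_ (Finset.sup_le fun h _ => Nat.le_of_dvd (addOrderOf_pos g) (hdvd h))
  obtain ⟨n0, hn0⟩ := hG g
  obtain ⟨m, hm, heq⟩ := (Nat.dvd_prime_pow hp).mp
    (addOrderOf_dvd_of_nsmul_eq_zero hn0)
  rcases Nat.eq_zero_or_pos m with hm0 | hm1
  · have h1 : addOrderOf (b g (0 : G)) = 1 := by rw [hzero g, addOrderOf_zero]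
    have := Finset.le_sup (f := fun h : G => addOrderOf (b g h)) (Finset.mem_univ (0 : G))
    rw [heq, hm0, pow_zero]
    simpa [h1] using this
  · have hne : p ^ (m - 1) • g ≠ 0 := by
      intro hcontra
      have hd : addOrderOf g ∣ p ^ (m - 1) := addOrderOf_dvd_of_nsmul_eq_zero hcontra
      rw [heq] at hd
      have := (Nat.pow_dvd_pow_iff_le_right hp.one_lt).mp hd
      omega
    obtain ⟨h, hh⟩ : ∃ h : G, b (p ^ (m - 1) • g) h ≠ 0 := by
      by_contra hall
      push_neg at hall
      exact hne (hnd _ hall)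
    have hne2 : p ^ (m - 1) • b g h ≠ 0 := by
      rwa [hsymm (p ^ (m - 1) • g) h, hhom h _ g, hsymm h g] at hh
    have hnotdvd : ¬ addOrderOf (b g h) ∣ p ^ (m - 1) := by
      intro hd
      exact hne2 (addOrderOf_dvd_iff_nsmul_eq_zero.mp hd)
    obtain ⟨j, hj, hjeq⟩ := (Nat.dvd_prime_pow hp).mp ((hdvd h).trans (dvd_of_eq heq))
    have hjm : j = m := by
      by_contra hne'
      exact hnotdvd (hjeq ▸ pow_dvd_pow p (by omega))
    have : addOrderOf (b g h) = addOrderOf g := by rw [hjeq, hjm, heq]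
    calc addOrderOf g = addOrderOf (b g h) := this.symm
      _ ≤ _ := Finset.le_sup (f := fun h : G => addOrderOf (b g h)) (Finset.mem_univ h)
end

section
/- Let G be a finite abelian group and q a non-degenerate quadratic form on G with values in ℚ/ℤ. Then the Gauss sum Θ(G,q) = |G|^{-1/2} ∑_{x ∈ G} e^{2πi q(x)} has absolute value 1. -/
open Complex

noncomputable def ee (r : ℚ) : ℂ := Complex.exp (2 * Real.pi * Complex.I * (r : ℂ))

lemma ee_add (r s : ℚ) : ee (r + s) = ee r * ee s := by
  rw [ee, ee, ee, ← Complex.exp_add]; push_cast; ring_nf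

lemma ee_int (n : ℤ) : ee (n : ℚ) = 1 := by
  rw [ee]
  have h : (2 * Real.pi * Complex.I * ((n:ℚ) : ℂ)) = (n:ℤ) * (2 * Real.pi * Complex.I) := by
    push_cast; ring
  rw [h, Complex.exp_int_mul_two_pi_mul_I]

lemma ee_congr {r s : ℚ} (n : ℤ) (h : r = s + n) : ee r = ee s := by
  rw [h, ee_add, ee_int, mul_one]

lemma ee_conj (r : ℚ) : (starRingEnd ℂ) (ee r) = ee (-r) := by
  rw [ee, ee, ← Complex.exp_conj]
  congr 1
  rw [map_mul, map_mul, map_mul, Complex.conj_I, Complex.conj_ofReal, map_ratCast,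
    map_ofNat]
  push_cast
  ring

lemma ee_ne_one {r : ℚ} (h : ¬ ∃ n : ℤ, r = n) : ee r ≠ 1 := by
  intro hc
  rw [ee, Complex.exp_eq_one_iff] at hc
  obtain ⟨n, hn⟩ := hc
  apply h
  refine ⟨n, ?_⟩
  have h2 : (2 * Real.pi * Complex.I) ≠ 0 := by
    simp [Real.pi_ne_zero, Complex.I_ne_zero]
  have hn' : (2 * Real.pi * Complex.I) * ((r:ℚ):ℂ) = (2 * Real.pi * Complex.I) * (n:ℂ) := by
    rw [hn]; ring
  have := mul_left_cancel₀ h2 hn'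
  exact_mod_cast this

theorem stmt5 {G : Type*} [AddCommGroup G] [Fintype G]
    -- `q` is a rational-valued lift of a `ℚ/ℤ`-valued quadratic form:
    (q : G → ℚ)
    (hq_even : ∀ x : G, ∃ n : ℤ, q (-x) = q x + n)
    (hq_bilin : ∀ x y z : G, ∃ n : ℤ,
      (q (x + z + y) - q (x + z) - q y)
        = (q (x + y) - q x - q y) + (q (z + y) - q z - q y) + n)
    -- non-degeneracy of `∂q` (as a `ℚ/ℤ`-valued form):
    (hnd : ∀ x : G, (∀ y : G, ∃ n : ℤ, q (x + y) - q x - q y = n) → x = 0) :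
    ‖(Real.sqrt (Fintype.card G) : ℂ)⁻¹ *
      ∑ x : G, Complex.exp (2 * Real.pi * Complex.I * (q x : ℂ))‖ = 1 := by
  classical
  set S : ℂ := ∑ x : G, ee (q x) with hS
  -- q 0 is an integer
  have hq0 : ∃ n : ℤ, q 0 = n := by
    obtain ⟨n, hn⟩ := hq_bilin 0 0 0
    simp only [add_zero] at hn
    exact ⟨n, by linarith⟩
  -- zero sum for nonzero z
  have key : ∀ z : G, z ≠ 0 → ∑ y : G, ee (q (z + y) - q y) = 0 := by
    intro z hz
    obtain ⟨y₀, hy₀⟩ : ∃ y₀, ¬ ∃ n : ℤ, q (z + y₀) - q z - q y₀ = n := by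
      by_contra h
      push_neg at h
      exact hz (hnd z (by simpa using h))
    set b : ℚ := q (z + y₀) - q z - q y₀ with hb
    have hbne : ee b ≠ 1 := ee_ne_one (by simpa using hy₀)
    have hshift : ∑ y : G, ee (q (z + y) - q y)
        = ee b * ∑ y : G, ee (q (z + y) - q y) := by
      rw [Finset.mul_sum]
      rw [← Equiv.sum_comp (Equiv.addLeft y₀) (fun y => ee (q (z + y) - q y))]
      apply Finset.sum_congr rfl
      intro y _
      simp only [Equiv.coe_addLeft]
      obtain ⟨n, hn⟩ := hq_bilin y₀ z y
      rw [← ee_add]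
      apply ee_congr n
      have e1 : z + (y₀ + y) = y₀ + y + z := by abel
      have e2 : z + y₀ = y₀ + z := by abel
      have e3 : z + y = y + z := by abel
      rw [hb, e1, e2, e3]
      linarith [hn]
    rcases mul_eq_zero.mp (by linear_combination hshift : (1 - ee b) * (∑ y : G, ee (q (z + y) - q y)) = 0) with h | h
    · exact absurd (by linear_combination -h) hbne
    · exact h
  -- main computation: S * conj S = card G
  have hmain : S * (starRingEnd ℂ) S = (Fintype.card G : ℂ) := by
    rw [hS, map_sum]
    simp_rw [ee_conj]
    rw [Fintype.sum_mul_sum]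
    rw [Finset.sum_comm]
    have step1 : ∀ y : G, ∑ x : G, ee (q x) * ee (-(q y))
        = ∑ z : G, ee (q (z + y) - q y) := by
      intro y
      rw [← Equiv.sum_comp (Equiv.addRight y) (fun x => ee (q x) * ee (-(q y)))]
      apply Finset.sum_congr rfl
      intro z _
      simp only [Equiv.coe_addRight]
      rw [← ee_add]
      congr 1
      ring
    simp_rw [step1]
    rw [Finset.sum_comm]
    rw [Finset.sum_eq_single_of_mem (0 : G) (Finset.mem_univ 0)
      (fun z _ hz => key z hz)]
    obtain ⟨n, hn⟩ := hq0
    have : ∀ y : G, ee (q (0 + y) - q y) = 1 := by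
      intro y
      rw [zero_add, sub_self]
      exact_mod_cast ee_int 0
    simp_rw [this]
    simp
  -- conclude
  have habs : ‖S‖ = Real.sqrt (Fintype.card G) := by
    have h1 : (Complex.normSq S : ℂ) = (Fintype.card G : ℂ) := by
      rw [← Complex.mul_conj, hmain]
    have h2 : Complex.normSq S = (Fintype.card G : ℝ) := by exact_mod_cast h1
    rw [Complex.norm_def, h2]
  have hcard : (0:ℝ) < Fintype.card G := by positivity
  have hsqrt : Real.sqrt (Fintype.card G) ≠ 0 := by positivity
  rw [show ∑ x : G, Complex.exp (2 * Real.pi * Complex.I * (q x : ℂ)) = S from rfl]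
  rw [norm_mul, norm_inv, Complex.norm_real, Real.norm_of_nonneg (Real.sqrt_nonneg _), habs, inv_mul_cancel₀ hsqrt]
end

section
/- Let α be an odd integer and r ≥ 1. Then the Gauss sum 2^{-r/2} ∑_{x=0}^{2^r - 1} e^{2πi α x² / 2^{r+1}} equals (-1)^{r(α²-1)/8} · e^{2πi α/8}. -/
open Complex Finset Real


lemma sum_range_double {M : Type*} [AddCommMonoid M] (n : ℕ) (g : ℕ → M) :
    ∑ i ∈ range (n + n), g i = ∑ i ∈ range n, g i + ∑ i ∈ range n, g (n + i) := by
  rw [Finset.range_add_eq_union, Finset.sum_union, Finset.sum_map]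
  · rfl
  · simp [Finset.disjoint_left]
    omega

lemma sum_range_two_mul {M : Type*} [AddCommMonoid M] (n : ℕ) (g : ℕ → M) :
    ∑ i ∈ range (2 * n), g i = ∑ i ∈ range n, (g (2 * i) + g (2 * i + 1)) := by
  induction n with
  | zero => simp
  | succ m ih =>
    have h : 2 * (m + 1) = (2 * m) + 1 + 1 := by ring
    rw [h, sum_range_succ, sum_range_succ, ih, sum_range_succ, add_assoc]

noncomputable def gaussF (α : ℤ) (r : ℕ) : ℂ :=
  ∑ x ∈ Finset.range (2 ^ r), Complex.exp (2 * Real.pi * Complex.I * α * (x : ℂ) ^ 2 / 2 ^ (r + 1))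

lemma step (α : ℤ) (hα : Odd α) (s : ℕ) : gaussF α (s + 3) = 2 * gaussF α (s + 1) := by
  have hne : ((2:ℂ)) ^ (s+4) ≠ 0 := pow_ne_zero _ two_ne_zero
  have hne2 : ((2:ℂ)) ^ (s+2) ≠ 0 := pow_ne_zero _ two_ne_zero
  unfold gaussF
  have h1 : (2:ℕ) ^ (s+3) = 2 * 2 ^ (s+2) := by ring
  rw [h1, sum_range_two_mul]
  rw [Finset.sum_add_distrib]
  -- even part
  have heven : ∀ y : ℕ, Complex.exp (2*(π:ℂ)*I*α*((2*y : ℕ):ℂ)^2 / 2^(s+3+1))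
      = Complex.exp (2*(π:ℂ)*I*α*(y:ℂ)^2 / 2^(s+2)) := by
    intro y
    congr 1
    rw [div_eq_div_iff hne (by exact hne2)]
    push_cast
    ring
  -- odd part cancels in pairs
  have hodd : ∀ y : ℕ, Complex.exp (2*(π:ℂ)*I*α*((2*(2^(s+1)+y)+1 : ℕ):ℂ)^2 / 2^(s+3+1))
      = - Complex.exp (2*(π:ℂ)*I*α*((2*y+1 : ℕ):ℂ)^2 / 2^(s+3+1)) := by
    intro y
    have key : (2*(π:ℂ)*I*α*((2*(2^(s+1)+y)+1 : ℕ):ℂ)^2 / 2^(s+3+1))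
        = 2*(π:ℂ)*I*α*((2*y+1 : ℕ):ℂ)^2 / 2^(s+3+1)
          + ((α*(2*y+1) + α*2^(s+1) : ℤ):ℂ) * ((π:ℂ) * I) := by
      rw [div_add' _ _ _ hne, div_eq_div_iff hne hne]
      push_cast
      ring
    rw [key, Complex.exp_add, Complex.exp_int_mul, Complex.exp_pi_mul_I]
    have hoddm : Odd (α*(2*y+1) + α*2^(s+1)) := by
      have h1 : Odd (α*(2*(y:ℤ)+1)) := hα.mul (odd_two_mul_add_one (y:ℤ))
      have h2 : Even (α*2^(s+1) : ℤ) := ⟨α*2^s, by ring⟩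
      exact h1.add_even h2
    rw [hoddm.neg_one_zpow]
    ring
  calc ∑ y ∈ range (2^(s+2)), Complex.exp (2*(π:ℂ)*I*α*((2*y : ℕ):ℂ)^2 / 2^(s+3+1))
        + ∑ y ∈ range (2^(s+2)), Complex.exp (2*(π:ℂ)*I*α*((2*y+1 : ℕ):ℂ)^2 / 2^(s+3+1))
      = (2 * ∑ x ∈ range (2^(s+1)), Complex.exp (2*(π:ℂ)*I*α*(x:ℂ)^2 / 2^(s+1+1))) + 0 := by
        congr 1
        · -- even part
          rw [Finset.sum_congr rfl (fun y _ => heven y)]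
          have h2 : (2:ℕ)^(s+2) = 2^(s+1) + 2^(s+1) := by ring
          rw [h2, sum_range_double]
          have hswap : ∀ y ∈ range (2^(s+1)),
              Complex.exp (2*(π:ℂ)*I*α*(((2^(s+1)+y : ℕ)):ℂ)^2 / 2^(s+2))
              = Complex.exp (2*(π:ℂ)*I*α*((y:ℕ):ℂ)^2 / 2^(s+2)) := by
            intro y _
            have key : (2*(π:ℂ)*I*α*(((2^(s+1)+y : ℕ)):ℂ)^2 / 2^(s+2))
                = 2*(π:ℂ)*I*α*((y:ℕ):ℂ)^2 / 2^(s+2) + ((α*y + α*2^s : ℤ):ℂ) * (2*(π:ℂ)*I) := by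
              rw [div_add' _ _ _ hne2, div_eq_div_iff hne2 hne2]
              push_cast
              ring
            rw [key, Complex.exp_add, Complex.exp_int_mul_two_pi_mul_I, mul_one]
          rw [Finset.sum_congr rfl hswap, ← two_mul]
        · -- odd part
          have h2 : (2:ℕ)^(s+2) = 2^(s+1) + 2^(s+1) := by ring
          rw [h2, sum_range_double, ← Finset.sum_add_distrib]
          refine Finset.sum_eq_zero (fun y _ => ?_)
          rw [hodd y]
          ring
    _ = 2 * ∑ x ∈ range (2^(s+1)), Complex.exp (2*(π:ℂ)*I*α*(x:ℂ)^2 / 2^(s+1+1)) := by ring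



lemma base1 (α : ℤ) : gaussF α 1 = 1 + Complex.exp (2*(π:ℂ)*I*α/4) := by
  unfold gaussF
  norm_num [Finset.sum_range_succ]

lemma base2 (α : ℤ) (hα : Odd α) : gaussF α 2 = 2 * Complex.exp (2*(π:ℂ)*I*α/8) := by
  unfold gaussF
  norm_num [Finset.sum_range_succ]
  have h2 : (2*(π:ℂ)*I*α*4/8) = (α:ℂ) * ((π:ℂ) * I) := by ring
  have h3 : (2*(π:ℂ)*I*α*9/8) = 2*(π:ℂ)*I*α/8 + (α:ℂ)*(2*(π:ℂ)*I) := by ring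
  rw [h2, h3, Complex.exp_add, Complex.exp_int_mul, Complex.exp_int_mul,
    Complex.exp_pi_mul_I, Complex.exp_two_pi_mul_I, hα.neg_one_zpow, one_zpow]
  ring

lemma expI2 : Complex.exp (((π/2:ℝ):ℂ)*I) = I := by
  rw [Complex.exp_mul_I, ← Complex.ofReal_cos, ← Complex.ofReal_sin,
    Real.cos_pi_div_two, Real.sin_pi_div_two]
  simp

lemma expI4 : Complex.exp (((π/4:ℝ):ℂ)*I) = (Real.sqrt 2:ℂ)/2 * (1 + I) := by
  rw [Complex.exp_mul_I, ← Complex.ofReal_cos, ← Complex.ofReal_sin,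
    Real.cos_pi_div_four, Real.sin_pi_div_four]
  push_cast
  ring

lemma val1 (α : ℤ) (hα : Odd α) :
    1 + Complex.exp (2*(π:ℂ)*I*α/4)
      = (Real.sqrt 2 : ℂ) * ((-1:ℂ)^((α^2-1)/8) * Complex.exp (2*(π:ℂ)*I*α/8)) := by
  have ht : ((Real.sqrt 2 : ℝ):ℂ)^2 = 2 := by
    rw [← Complex.ofReal_pow, Real.sq_sqrt (by norm_num : (0:ℝ) ≤ 2)]
    norm_num
  have hI := Complex.I_sq
  have hmod : α % 8 = 1 ∨ α % 8 = 3 ∨ α % 8 = 5 ∨ α % 8 = 7 := by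
    have := Int.odd_iff.mp hα; omega
  set q := α / 8 with hqdef
  have key : ∀ s : ℕ, ∀ c : ℤ, (α:ℂ) = 8*(q:ℂ) + (s:ℕ) → (α^2-1)/8 = 8*q^2+2*s*q+c →
      Complex.exp (2*(π:ℂ)*I*α/4) = I^(s:ℕ) ∧
      Complex.exp (2*(π:ℂ)*I*α/8) = (Complex.exp (((π/4:ℝ):ℂ)*I))^(s:ℕ) := by
    intro s c hqC _
    constructor
    · have h : 2*(π:ℂ)*I*α/4 = ((2*q:ℤ):ℂ)*(2*(π:ℂ)*I) + ((s:ℕ):ℂ)*(((π/2:ℝ):ℂ)*I) := by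
        rw [hqC]; push_cast; ring
      rw [h, Complex.exp_add, Complex.exp_int_mul_two_pi_mul_I, one_mul,
        Complex.exp_nat_mul, expI2]
    · have h : 2*(π:ℂ)*I*α/8 = ((q:ℤ):ℂ)*(2*(π:ℂ)*I) + ((s:ℕ):ℂ)*(((π/4:ℝ):ℂ)*I) := by
        rw [hqC]; push_cast; ring
      rw [h, Complex.exp_add, Complex.exp_int_mul_two_pi_mul_I, one_mul,
        Complex.exp_nat_mul]
  rcases hmod with h | h | h | h
  · have hq : α = 8*q + 1 := by omega
    have hqC : (α:ℂ) = 8*(q:ℂ) + ((1:ℕ):ℂ) := by rw [hq]; push_cast; ring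
    have hk : (α^2-1)/8 = 8*q^2+2*1*q+0 := by
      rw [show α^2-1 = 8*(8*q^2+2*1*q+0) by rw [hq]; ring]
      exact Int.mul_ediv_cancel_left _ (by norm_num)
    obtain ⟨e4, e8⟩ := key 1 0 hqC hk
    have hpar : Even (8*q^2+2*1*q+0 : ℤ) := ⟨4*q^2+q, by ring⟩
    rw [e4, e8, hk, hpar.neg_one_zpow, expI4]
    linear_combination (-(1+I)/2) * ht
  · have hq : α = 8*q + 3 := by omega
    have hqC : (α:ℂ) = 8*(q:ℂ) + ((3:ℕ):ℂ) := by rw [hq]; push_cast; ring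
    have hk : (α^2-1)/8 = 8*q^2+2*3*q+1 := by
      rw [show α^2-1 = 8*(8*q^2+2*3*q+1) by rw [hq]; ring]
      exact Int.mul_ediv_cancel_left _ (by norm_num)
    obtain ⟨e4, e8⟩ := key 3 1 hqC hk
    have hpar : Odd (8*q^2+2*3*q+1 : ℤ) := ⟨4*q^2+3*q, by ring⟩
    rw [e4, e8, hk, hpar.neg_one_zpow, expI4]
    linear_combination ((((Real.sqrt 2:ℂ))^2+2)*(1+I)^3/8) * ht + ((3/2)*(1+I)) * hI
  · have hq : α = 8*q + 5 := by omega
    have hqC : (α:ℂ) = 8*(q:ℂ) + ((5:ℕ):ℂ) := by rw [hq]; push_cast; ring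
    have hk : (α^2-1)/8 = 8*q^2+2*5*q+3 := by
      rw [show α^2-1 = 8*(8*q^2+2*5*q+3) by rw [hq]; ring]
      exact Int.mul_ediv_cancel_left _ (by norm_num)
    obtain ⟨e4, e8⟩ := key 5 3 hqC hk
    have hpar : Odd (8*q^2+2*5*q+3 : ℤ) := ⟨4*q^2+5*q+1, by ring⟩
    rw [e4, e8, hk, hpar.neg_one_zpow, expI4]
    linear_combination ((((Real.sqrt 2:ℂ))^4+2*((Real.sqrt 2:ℂ))^2+4)*(1+I)^5/32) * ht
      + ((5/4)*(1+I+I^2+I^3)) * hI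
  · have hq : α = 8*q + 7 := by omega
    have hqC : (α:ℂ) = 8*(q:ℂ) + ((7:ℕ):ℂ) := by rw [hq]; push_cast; ring
    have hk : (α^2-1)/8 = 8*q^2+2*7*q+6 := by
      rw [show α^2-1 = 8*(8*q^2+2*7*q+6) by rw [hq]; ring]
      exact Int.mul_ediv_cancel_left _ (by norm_num)
    obtain ⟨e4, e8⟩ := key 7 6 hqC hk
    have hpar : Even (8*q^2+2*7*q+6 : ℤ) := ⟨4*q^2+7*q+3, by ring⟩
    rw [e4, e8, hk, hpar.neg_one_zpow, expI4]
    linear_combination (-(((Real.sqrt 2:ℂ))^6+2*((Real.sqrt 2:ℂ))^4+4*((Real.sqrt 2:ℂ))^2+8)*(1+I)^7/128) * ht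
      + ((7/8)*(I^5-I^4-4*I^3-4*I^2-I+1)) * hI

lemma main (α : ℤ) (hα : Odd α) : ∀ r : ℕ, 1 ≤ r →
    ((Real.sqrt (2^r) : ℝ):ℂ)⁻¹ * gaussF α r
      = (-1:ℂ)^((r:ℤ) * ((α^2-1)/8)) * Complex.exp (2*(π:ℂ)*I*α/8) := by
  intro r
  induction r using Nat.strong_induction_on with
  | _ r ih =>
    intro hr
    match r, hr with
    | 1, _ =>
      have hne : ((Real.sqrt 2 : ℝ):ℂ) ≠ 0 :=
        Complex.ofReal_ne_zero.mpr (ne_of_gt (Real.sqrt_pos.mpr (by norm_num)))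
      rw [show ((1:ℕ):ℤ) * ((α^2-1)/8) = (α^2-1)/8 by push_cast; ring,
        show ((2:ℝ)^1) = 2 by norm_num, base1, val1 α hα, inv_mul_cancel_left₀ hne]
    | 2, _ =>
      have hev : Even (((2:ℕ):ℤ) * ((α^2-1)/8)) := ⟨(α^2-1)/8, by push_cast; ring⟩
      rw [base2 α hα, hev.neg_one_zpow, show Real.sqrt ((2:ℝ)^2) = 2 from Real.sqrt_sq (by norm_num)]
      push_cast
      field_simp
    | (s+3), _ =>
      have ihs := ih (s+1) (by omega) (by omega)
      have hsqrt : Real.sqrt ((2:ℝ)^(s+3)) = 2 * Real.sqrt ((2:ℝ)^(s+1)) := by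
        rw [show (2:ℝ)^(s+3) = 2^2 * 2^(s+1) by ring, Real.sqrt_mul (by positivity),
          Real.sqrt_sq (by norm_num)]
      have hsign : (-1:ℂ)^(((s+3:ℕ):ℤ) * ((α^2-1)/8)) = (-1:ℂ)^(((s+1:ℕ):ℤ) * ((α^2-1)/8)) := by
        have h : ((s+3:ℕ):ℤ) * ((α^2-1)/8) = ((s+1:ℕ):ℤ) * ((α^2-1)/8) + 2 * ((α^2-1)/8) := by
          push_cast; ring
        have hev : Even (2 * ((α^2-1)/8) : ℤ) := ⟨(α^2-1)/8, two_mul _⟩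
        rw [h, zpow_add₀ (by norm_num : (-1:ℂ) ≠ 0), hev.neg_one_zpow, mul_one]
      have hne : ((Real.sqrt ((2:ℝ)^(s+1)) : ℝ):ℂ) ≠ 0 :=
        Complex.ofReal_ne_zero.mpr (ne_of_gt (Real.sqrt_pos.mpr (by positivity)))
      rw [step α hα s, hsqrt, hsign, ← ihs]
      push_cast
      field_simp

theorem stmt6 (α : ℤ) (hα : Odd α) (r : ℕ) (hr : 1 ≤ r) :
    (Real.sqrt (2 ^ r) : ℂ)⁻¹ *
        ∑ x ∈ Finset.range (2 ^ r),
          Complex.exp (2 * Real.pi * Complex.I * α * (x : ℂ) ^ 2 / 2 ^ (r + 1))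
      = (-1 : ℂ) ^ ((r : ℤ) * ((α ^ 2 - 1) / 8)) *
          Complex.exp (2 * Real.pi * Complex.I * α / 8) := by
  have h := main α hα r hr
  simpa [gaussF] using h
end

section
/- Let α, β, γ be integers with β odd and let r ≥ 1. Then 2^{-r} ∑_{x₁=0}^{2^r-1} ∑_{x₂=0}^{2^r-1} e^{2πi (α x₁² + β x₁ x₂ + γ x₂²)/2^r} = (-1)^{αγr}. -/
open Finset

noncomputable def psi (r : ℕ) (n : ℤ) : ℂ :=
  Complex.exp (2 * Real.pi * Complex.I * n / 2 ^ r)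

def QF (α β γ : ℤ) (a b : ℕ) : ℤ :=
  α * (a : ℤ) ^ 2 + β * a * b + γ * (b : ℤ) ^ 2

noncomputable def SG (α β γ : ℤ) (r : ℕ) : ℂ :=
  ∑ x₁ ∈ range (2 ^ r), ∑ x₂ ∈ range (2 ^ r), psi r (QF α β γ x₁ x₂)

lemma psi_add (r : ℕ) (a b : ℤ) : psi r (a + b) = psi r a * psi r b := by
  rw [psi, psi, psi, ← Complex.exp_add]
  congr 1
  push_cast
  ring

lemma psi_top (r : ℕ) (m : ℤ) : psi r (2 ^ r * m) = 1 := by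
  have h : (2 : ℂ) ^ r ≠ 0 := pow_ne_zero _ two_ne_zero
  rw [psi, show 2 * (Real.pi : ℂ) * Complex.I * ((2 ^ r * m : ℤ) : ℂ) / 2 ^ r
      = (m : ℂ) * (2 * Real.pi * Complex.I) by push_cast; field_simp]
  exact Complex.exp_int_mul_two_pi_mul_I m

lemma psi_half (k : ℕ) (m : ℤ) : psi (k + 1) (2 ^ k * m) = (-1 : ℂ) ^ m := by
  have h : (2 : ℂ) ^ k ≠ 0 := pow_ne_zero _ two_ne_zero
  rw [psi, show 2 * (Real.pi : ℂ) * Complex.I * ((2 ^ k * m : ℤ) : ℂ) / 2 ^ (k + 1)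
      = (m : ℂ) * (Real.pi * Complex.I) by push_cast [pow_succ]; field_simp]
  rw [Complex.exp_int_mul, Complex.exp_pi_mul_I]

lemma psi_four (k : ℕ) (n : ℤ) : psi (k + 2) (4 * n) = psi k n := by
  have h : (2 : ℂ) ^ k ≠ 0 := pow_ne_zero _ two_ne_zero
  rw [psi, psi]
  congr 1
  push_cast [pow_succ]
  field_simp
  ring

lemma negpow_congr {m n : ℤ} (h : Even (m - n)) : (-1 : ℂ) ^ m = (-1 : ℂ) ^ n := by
  obtain ⟨c, hc⟩ := h
  have hm : m = n + 2 * c := by omega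
  rw [hm, zpow_add₀ (by norm_num : (-1 : ℂ) ≠ 0), zpow_mul]
  norm_num

lemma negpow_odd_mul {β : ℤ} (hβ : Odd β) (n : ℤ) : (-1 : ℂ) ^ (β * n) = (-1 : ℂ) ^ n := by
  apply negpow_congr
  obtain ⟨c, hc⟩ := hβ
  exact ⟨c * n, by subst hc; ring⟩

lemma shift1 (α β γ : ℤ) (hβ : Odd β) (k u1 u2 : ℕ) :
    psi (k + 2) (QF α β γ (2 ^ (k + 1) + u1) u2)
      = (-1 : ℂ) ^ (u2 : ℤ) * psi (k + 2) (QF α β γ u1 u2) := by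
  have hd : QF α β γ (2 ^ (k + 1) + u1) u2
      = 2 ^ (k + 2) * (α * u1 + α * 2 ^ k) + (2 ^ (k + 1) * (β * u2) + QF α β γ u1 u2) := by
    unfold QF; push_cast; ring
  rw [hd, psi_add, psi_add, psi_top, psi_half, negpow_odd_mul hβ, one_mul]

lemma shift2 (α β γ : ℤ) (hβ : Odd β) (k u1 u2 : ℕ) :
    psi (k + 2) (QF α β γ u1 (2 ^ (k + 1) + u2))
      = (-1 : ℂ) ^ (u1 : ℤ) * psi (k + 2) (QF α β γ u1 u2) := by
  have hd : QF α β γ u1 (2 ^ (k + 1) + u2)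
      = 2 ^ (k + 2) * (γ * u2 + γ * 2 ^ k) + (2 ^ (k + 1) * (β * u1) + QF α β γ u1 u2) := by
    unfold QF; push_cast; ring
  rw [hd, psi_add, psi_add, psi_top, psi_half, negpow_odd_mul hβ, one_mul]

lemma double_split (h : ℕ) (f : ℕ → ℕ → ℂ) :
    ∑ x1 ∈ range (h + h), ∑ x2 ∈ range (h + h), f x1 x2
      = ∑ u1 ∈ range h, ∑ u2 ∈ range h,
          (f u1 u2 + f (h + u1) u2 + (f u1 (h + u2) + f (h + u1) (h + u2))) := by
  rw [Finset.sum_range_add, ← Finset.sum_add_distrib]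
  refine Finset.sum_congr rfl fun u1 _ => ?_
  rw [Finset.sum_range_add, Finset.sum_range_add, ← Finset.sum_add_distrib,
    ← Finset.sum_add_distrib]
  rw [← Finset.sum_add_distrib]
  apply Finset.sum_congr rfl
  intro u2 _
  ring

lemma extract (m : ℕ) (g : ℕ → ℂ) :
    ∑ u ∈ range (2 * m), (1 + (-1 : ℂ) ^ (u : ℤ)) * g u = 2 * ∑ v ∈ range m, g (2 * v) := by
  induction m with
  | zero => simp
  | succ m ih =>
    have h2 : 2 * (m + 1) = 2 * m + 1 + 1 := by ring
    rw [h2, Finset.sum_range_succ, Finset.sum_range_succ, ih, Finset.sum_range_succ]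
    have he : (-1 : ℂ) ^ ((2 * m : ℕ) : ℤ) = 1 := Even.neg_one_zpow ⟨m, by push_cast; ring⟩
    have ho : (-1 : ℂ) ^ ((2 * m + 1 : ℕ) : ℤ) = -1 := Odd.neg_one_zpow ⟨m, by push_cast; ring⟩
    rw [he, ho]
    ring

lemma SG_step (α β γ : ℤ) (hβ : Odd β) (k : ℕ) :
    SG α β γ (k + 2) = 4 * SG α β γ k := by
  have hpow : (2 : ℕ) ^ (k + 2) = 2 ^ (k + 1) + 2 ^ (k + 1) := by ring
  rw [SG, hpow, double_split]
  have key : ∀ u1 u2 : ℕ,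
      psi (k + 2) (QF α β γ u1 u2) + psi (k + 2) (QF α β γ (2 ^ (k + 1) + u1) u2)
        + (psi (k + 2) (QF α β γ u1 (2 ^ (k + 1) + u2))
            + psi (k + 2) (QF α β γ (2 ^ (k + 1) + u1) (2 ^ (k + 1) + u2)))
      = (1 + (-1 : ℂ) ^ (u1 : ℤ)) * ((1 + (-1 : ℂ) ^ (u2 : ℤ)) * psi (k + 2) (QF α β γ u1 u2)) := by
    intro u1 u2
    rw [shift1 α β γ hβ, shift2 α β γ hβ, shift1 α β γ hβ, shift2 α β γ hβ]
    have hsh : (-1 : ℂ) ^ (((2 ^ (k + 1) + u2 : ℕ)) : ℤ) = (-1 : ℂ) ^ (u2 : ℤ) := by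
      apply negpow_congr
      exact ⟨2 ^ k, by push_cast [pow_succ]; ring⟩
    rw [hsh]
    ring
  simp only [key]
  have hh : (2 : ℕ) ^ (k + 1) = 2 * 2 ^ k := by ring
  rw [hh]
  have inner_eq : ∀ u1 : ℕ,
      ∑ u2 ∈ range (2 * 2 ^ k),
          (1 + (-1 : ℂ) ^ (u1 : ℤ)) * ((1 + (-1 : ℂ) ^ (u2 : ℤ)) * psi (k + 2) (QF α β γ u1 u2))
        = (1 + (-1 : ℂ) ^ (u1 : ℤ)) *
            (2 * ∑ v2 ∈ range (2 ^ k), psi (k + 2) (QF α β γ u1 (2 * v2))) := by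
    intro u1
    rw [← Finset.mul_sum, extract (2 ^ k) (fun u2 => psi (k + 2) (QF α β γ u1 u2))]
  simp only [inner_eq]
  rw [extract (2 ^ k) (fun u1 => 2 * ∑ v2 ∈ range (2 ^ k), psi (k + 2) (QF α β γ u1 (2 * v2)))]
  have hq : ∀ a b : ℕ, psi (k + 2) (QF α β γ (2 * a) (2 * b)) = psi k (QF α β γ a b) := by
    intro a b
    rw [show QF α β γ (2 * a) (2 * b) = 4 * QF α β γ a b by unfold QF; push_cast; ring, psi_four]
  simp only [hq, ← Finset.mul_sum]
  rw [SG]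
  ring

lemma psi_one (n : ℤ) : psi 1 n = (-1 : ℂ) ^ n := by
  have := psi_half 0 n
  simpa using this

lemma SG_zero (α β γ : ℤ) : SG α β γ 0 = 1 := by
  simp [SG, QF, psi]

lemma SG_one (α β γ : ℤ) (hβ : Odd β) : SG α β γ 1 = 2 * (-1 : ℂ) ^ (α * γ) := by
  have h00 : QF α β γ 0 0 = 0 := by simp [QF]
  have h01 : QF α β γ 0 1 = γ := by simp [QF]
  have h10 : QF α β γ 1 0 = α := by simp [QF]
  have h11 : QF α β γ 1 1 = α + β + γ := by unfold QF; push_cast; ring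
  rw [SG]
  norm_num [Finset.sum_range_succ, h00, h01, h10, h11, psi_one]
  rcases Int.even_or_odd α with hα | hα <;> rcases Int.even_or_odd γ with hγ | hγ
  · rw [Even.neg_one_zpow hγ, Even.neg_one_zpow hα,
      Odd.neg_one_zpow ((hα.add_odd hβ).add_even hγ),
      Even.neg_one_zpow (hα.mul_right γ)]
    ring
  · rw [Odd.neg_one_zpow hγ, Even.neg_one_zpow hα,
      Even.neg_one_zpow ((hα.add_odd hβ).add_odd hγ),
      Even.neg_one_zpow (hα.mul_right γ)]
    ring
  · rw [Even.neg_one_zpow hγ, Odd.neg_one_zpow hα,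
      Even.neg_one_zpow ((hα.add_odd hβ).add hγ),
      Even.neg_one_zpow (hγ.mul_left α)]
    ring
  · rw [Odd.neg_one_zpow hγ, Odd.neg_one_zpow hα,
      Odd.neg_one_zpow ((hα.add_odd hβ).add_odd hγ),
      Odd.neg_one_zpow (hα.mul hγ)]
    ring

lemma SG_main (α β γ : ℤ) (hβ : Odd β) : ∀ r : ℕ,
    SG α β γ r = 2 ^ r * (-1 : ℂ) ^ (α * γ * (r : ℤ)) := by
  intro r
  induction r using Nat.strong_induction_on with
  | _ r ih =>
    match r, ih with
    | 0, _ => simpa using SG_zero α β γ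
    | 1, _ => simpa using SG_one α β γ hβ
    | (k + 2), ih =>
      rw [SG_step α β γ hβ k, ih k (by omega)]
      have : (-1 : ℂ) ^ (α * γ * ((k : ℤ) + 2)) = (-1 : ℂ) ^ (α * γ * (k : ℤ)) :=
        negpow_congr ⟨α * γ, by ring⟩
      push_cast
      rw [this]
      ring

theorem stmt7 (α β γ : ℤ) (hβ : Odd β) (r : ℕ) (hr : 1 ≤ r) :
    ((2 : ℂ) ^ r)⁻¹ *
        ∑ x₁ ∈ Finset.range (2 ^ r), ∑ x₂ ∈ Finset.range (2 ^ r),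
          Complex.exp (2 * Real.pi * Complex.I *
            ((α : ℂ) * (x₁ : ℂ) ^ 2 + (β : ℂ) * x₁ * x₂ + (γ : ℂ) * (x₂ : ℂ) ^ 2) / 2 ^ r)
      = (-1 : ℂ) ^ (α * γ * (r : ℤ)) := by
  have hsum : (∑ x₁ ∈ Finset.range (2 ^ r), ∑ x₂ ∈ Finset.range (2 ^ r),
      Complex.exp (2 * Real.pi * Complex.I *
        ((α : ℂ) * (x₁ : ℂ) ^ 2 + (β : ℂ) * x₁ * x₂ + (γ : ℂ) * (x₂ : ℂ) ^ 2) / 2 ^ r))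
      = SG α β γ r := by
    refine Finset.sum_congr rfl fun x₁ _ => Finset.sum_congr rfl fun x₂ _ => ?_
    rw [psi, QF]
    congr 2
    push_cast
    ring
  rw [hsum, SG_main α β γ hβ r, ← mul_assoc,
    inv_mul_cancel₀ (pow_ne_zero _ (two_ne_zero : (2 : ℂ) ≠ 0)), one_mul]
end

section
/- Let p be an odd prime, r a positive integer, 0 ≤ s < r, and α an integer coprime to p. Then |ℤ/p^r ℤ|^{-1/2} ∑_{x mod p^r} e^{2πi p^s α x² ((p^r+1)/2) / p^r} = p^{s/2} · (ℤ/p^{r-s}ℤ)^{-1/2} ∑_{y mod p^{r-s}} e^{2πi α y² ((p^{r-s}+1)/2) / p^{r-s}}. That is, Θ(ℤ/p^rℤ, p^s q) = p^{s/2} Θ(ℤ/p^{r-s}ℤ, q̄) where q(x) = ((p^r+1)/2)α x²/p^r and q̄(y) = ((p^{r-s}+1)/2)α y²/p^{r-s}. -/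
private lemma exp_add_int_aux (c : ℂ) (k : ℤ) :
    Complex.exp (c + k * (2 * Real.pi * Complex.I)) = Complex.exp c := by
  rw [Complex.exp_add, Complex.exp_int_mul_two_pi_mul_I, mul_one]

private lemma shift_aux (f : ℕ → ℂ) (b : ℕ) (hf : ∀ x, f (x + b) = f x) (k x : ℕ) :
    f (x + k * b) = f x := by
  induction k with
  | zero => simp
  | succ k ih =>
      have h : x + (k + 1) * b = (x + k * b) + b := by ring
      rw [h, hf, ih]

private lemma sum_range_mul_of_periodic (f : ℕ → ℂ) (b : ℕ)
    (hf : ∀ x, f (x + b) = f x) (n : ℕ) :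
    ∑ x ∈ Finset.range (n * b), f x = n * ∑ x ∈ Finset.range b, f x := by
  induction n with
  | zero => simp
  | succ n ih =>
      rw [Nat.succ_mul, Finset.sum_range_add, ih]
      have : ∀ x, f (n * b + x) = f x := by
        intro x
        rw [add_comm, shift_aux f b hf]
      rw [Finset.sum_congr rfl fun x _ => this x]
      push_cast
      ring

theorem stmt8 (p : ℕ) (hp : p.Prime) (hodd : Odd p) (r s : ℕ) (hs : s < r)
    (α : ℤ) (hα : IsCoprime α (p : ℤ)) :
    (Real.sqrt (p ^ r) : ℂ)⁻¹ *
        ∑ x ∈ Finset.range (p ^ r),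
          Complex.exp (2 * Real.pi * Complex.I *
            ((p : ℂ) ^ s * (((p ^ r + 1) / 2 : ℕ) : ℂ) * (α : ℂ) * (x : ℂ) ^ 2) / (p : ℂ) ^ r)
      = (Real.sqrt (p ^ s) : ℂ) * (Real.sqrt (p ^ (r - s)) : ℂ)⁻¹ *
          ∑ y ∈ Finset.range (p ^ (r - s)),
            Complex.exp (2 * Real.pi * Complex.I *
              ((((p ^ (r - s) + 1) / 2 : ℕ) : ℂ) * (α : ℂ) * (y : ℂ) ^ 2) / (p : ℂ) ^ (r - s)) := by
  have hp1 : 1 < p := hp.one_lt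
  have hp0 : 0 < p := hp.pos
  set t := r - s with ht
  have htr : r = s + t := (Nat.add_sub_cancel' hs.le).symm
  have hpr : p ^ r = p ^ s * p ^ t := by rw [htr, pow_add]
  -- parity facts
  have hoddr : Odd (p ^ r) := hodd.pow
  have hoddt : Odd (p ^ t) := hodd.pow
  have hodds : Odd (p ^ s) := hodd.pow
  set m : ℕ := (p ^ r + 1) / 2 with hm
  set m' : ℕ := (p ^ t + 1) / 2 with hm'
  set d : ℕ := (p ^ s - 1) / 2 with hd
  have h2m : 2 * m = p ^ r + 1 := by
    obtain ⟨k, hk⟩ := hoddr; omega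
  have h2m' : 2 * m' = p ^ t + 1 := by
    obtain ⟨k, hk⟩ := hoddt; omega
  have h2d : 2 * d + 1 = p ^ s := by
    obtain ⟨k, hk⟩ := hodds
    have : 1 ≤ p ^ s := Nat.one_le_pow _ _ hp0
    omega
  have hmd : m = p ^ t * d + m' := by
    have key : 2 * m = 2 * (p ^ t * d + m') := by
      have hh : 2 * (p ^ t * d + m') = p ^ t * (2 * d + 1) + 1 := by
        rw [Nat.mul_add, h2m']; ring
      rw [h2m, hh, h2d, ← pow_add, Nat.add_comm t s, ← htr]
    omega
  have hpC : (p : ℂ) ≠ 0 := by exact_mod_cast hp0.ne'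
  have hptC : (p : ℂ) ^ t ≠ 0 := pow_ne_zero _ hpC
  -- the common function
  set g : ℕ → ℂ := fun x => Complex.exp (2 * Real.pi * Complex.I *
      ((m' : ℂ) * (α : ℂ) * (x : ℂ) ^ 2) / (p : ℂ) ^ t) with hg
  -- termwise equality on LHS
  have hterm : ∀ x : ℕ, Complex.exp (2 * Real.pi * Complex.I *
      ((p : ℂ) ^ s * (m : ℂ) * (α : ℂ) * (x : ℂ) ^ 2) / (p : ℂ) ^ r) = g x := by
    intro x
    have harg : 2 * (Real.pi : ℂ) * Complex.I *
        ((p : ℂ) ^ s * (m : ℂ) * (α : ℂ) * (x : ℂ) ^ 2) / (p : ℂ) ^ r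
        = 2 * (Real.pi : ℂ) * Complex.I * ((m' : ℂ) * (α : ℂ) * (x : ℂ) ^ 2) / (p : ℂ) ^ t
          + ((d : ℤ) * α * (x : ℤ) ^ 2 : ℤ) * (2 * (Real.pi : ℂ) * Complex.I) := by
      have hmC : (m : ℂ) = (p : ℂ) ^ t * (d : ℂ) + (m' : ℂ) := by
        exact_mod_cast congrArg (Nat.cast : ℕ → ℂ) hmd
      have hprC : (p : ℂ) ^ r = (p : ℂ) ^ s * (p : ℂ) ^ t := by
        rw [htr, pow_add]
      rw [hprC, hmC]
      have hpsC : (p : ℂ) ^ s ≠ 0 := pow_ne_zero _ hpC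
      push_cast
      field_simp
      ring
    rw [harg, exp_add_int_aux]
  -- periodicity of g
  have hper : ∀ x, g (x + p ^ t) = g x := by
    intro x
    have harg : 2 * (Real.pi : ℂ) * Complex.I *
        ((m' : ℂ) * (α : ℂ) * ((x + p ^ t : ℕ) : ℂ) ^ 2) / (p : ℂ) ^ t
        = 2 * (Real.pi : ℂ) * Complex.I * ((m' : ℂ) * (α : ℂ) * (x : ℂ) ^ 2) / (p : ℂ) ^ t
          + ((m' : ℤ) * α * (2 * x + p ^ t) : ℤ) * (2 * (Real.pi : ℂ) * Complex.I) := by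
      push_cast
      field_simp
      ring
    simp only [hg]
    rw [harg, exp_add_int_aux]
  -- rewrite LHS sum
  have hsum : ∑ x ∈ Finset.range (p ^ r),
      Complex.exp (2 * Real.pi * Complex.I *
        ((p : ℂ) ^ s * (m : ℂ) * (α : ℂ) * (x : ℂ) ^ 2) / (p : ℂ) ^ r)
      = (p ^ s : ℂ) * ∑ y ∈ Finset.range (p ^ t), g y := by
    rw [Finset.sum_congr rfl fun x _ => hterm x, hpr,
      sum_range_mul_of_periodic g (p ^ t) hper (p ^ s)]
    push_cast
    ring
  rw [hsum]
  -- constants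
  have hsq : (Real.sqrt (p ^ r) : ℂ) = (Real.sqrt (p ^ s) : ℂ) * (Real.sqrt (p ^ t) : ℂ) := by
    have h : Real.sqrt ((p:ℝ) ^ r) = Real.sqrt ((p:ℝ) ^ s) * Real.sqrt ((p:ℝ) ^ t) := by
      rw [htr, pow_add]
      exact Real.sqrt_mul (by positivity) _
    exact_mod_cast congrArg (Complex.ofReal) h
  have hps : (Real.sqrt (p ^ s) : ℂ) * (Real.sqrt (p ^ s) : ℂ) = ((p : ℂ)) ^ s := by
    rw [← Complex.ofReal_mul, Real.mul_self_sqrt (by positivity)]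
    push_cast
    ring
  have hsqs : (Real.sqrt (p ^ s) : ℂ) ≠ 0 := by
    have : (0:ℝ) < Real.sqrt (p ^ s) := Real.sqrt_pos.mpr (by positivity)
    exact_mod_cast this.ne'
  have hsqt : (Real.sqrt (p ^ t) : ℂ) ≠ 0 := by
    have : (0:ℝ) < Real.sqrt (p ^ t) := Real.sqrt_pos.mpr (by positivity)
    exact_mod_cast this.ne'
  rw [hsq, ← mul_assoc]
  congr 1
  rw [mul_inv]
  field_simp
  rw [← hps]
  ring
end

section
/- Let (G,q) be a finite abelian group with a quadratic form q such that ∂q is non-degenerate. For k ≥ 1, let F_k(G) = {(x₁,…,x_k) ∈ G^k : ∑ xᵢ = 0} with quadratic form F_k(q)(x₁,…,x_k) = ∑ q(xᵢ). Then the radical of ∂F_k(q) on F_k(G) equals {(x,x,…,x) : kx = 0}, and in particular is isomorphic to G[k] = {x ∈ G : kx = 0}. -/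
theorem stmt10 {G : Type*} [AddCommGroup G] [Fintype G]
    (q : G → AddCircle (1 : ℚ))
    (hq_even : ∀ x : G, q (-x) = q x)
    (hq_bilin : ∀ x y z : G,
      q (x + z + y) - q (x + z) - q y
        = (q (x + y) - q x - q y) + (q (z + y) - q z - q y))
    (hnd : ∀ x : G, (∀ y : G, q (x + y) - q x - q y = 0) → x = 0)
    (k : ℕ) (hk : 1 ≤ k) (x : Fin k → G) (hx : ∑ i, x i = 0) :
    (∀ y : Fin k → G, (∑ i, y i = 0) →
        (∑ i, q (x i + y i)) - (∑ i, q (x i)) - (∑ i, q (y i)) = 0)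
      ↔ ∃ a : G, k • a = 0 ∧ x = fun _ => a := by
  set b : G → G → AddCircle (1 : ℚ) := fun u v => q (u + v) - q u - q v with hb
  have badd : ∀ u w v : G, b (u + w) v = b u v + b w v := fun u w v => hq_bilin u v w
  have bsymm : ∀ u v : G, b u v = b v u := by
    intro u v
    simp only [hb]
    rw [add_comm u v, sub_sub, sub_sub, add_comm (q u) (q v)]
  have b0 : ∀ v : G, b 0 v = 0 := by
    intro v
    have h := badd 0 0 v
    rw [add_zero] at h
    exact (left_eq_add.mp h)
  have bneg : ∀ u v : G, b (-u) v = -b u v := by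
    intro u v
    have h := badd u (-u) v
    rw [add_neg_cancel, b0] at h
    exact (eq_neg_of_add_eq_zero_right h.symm)
  have b0r : ∀ u : G, b u 0 = 0 := fun u => (bsymm u 0).trans (b0 u)
  have baddr : ∀ u v w : G, b u (v + w) = b u v + b u w := by
    intro u v w
    rw [bsymm, badd, bsymm v u, bsymm w u]
  have bsumr : ∀ (a : G) (s : Finset (Fin k)) (y : Fin k → G),
      ∑ i ∈ s, b a (y i) = b a (∑ i ∈ s, y i) := by
    intro a s y
    induction s using Finset.induction_on with
    | empty => simp [b0r]
    | insert _ _ hns ih => simp [Finset.sum_insert hns, baddr, ih]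
  have sumrw : ∀ u v : Fin k → G,
      (∑ i, q (u i + v i)) - (∑ i, q (u i)) - (∑ i, q (v i)) = ∑ i, b (u i) (v i) := by
    intro u v
    simp only [hb, Finset.sum_sub_distrib]
  constructor
  · intro h
    have key : ∀ i j : Fin k, x i = x j := by
      intro i j
      by_cases hij : i = j
      · rw [hij]
      · have hz : ∀ z : G, b (x i - x j) z = 0 := by
          intro z
          set y : Fin k → G := fun t => (Pi.single i z : Fin k → G) t - (Pi.single j z : Fin k → G) t with hy
          have hsingle : ∀ (m : Fin k), ∑ t, Pi.single m z t = z := by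
            intro m
            simp [Pi.single_apply]
          have hsum : ∑ t, y t = 0 := by
            simp [hy, Finset.sum_sub_distrib, hsingle]
          have h1 := h y hsum
          rw [sumrw] at h1
          have hterm : ∀ m : Fin k, ∀ u : Fin k → G,
              ∑ t, b (u t) ((Pi.single m z : Fin k → G) t) = b (u m) z := by
            intro m u
            rw [Finset.sum_eq_single m]
            · simp
            · intro t _ ht
              rw [Pi.single_eq_of_ne ht, b0r]
            · intro habs; exact absurd (Finset.mem_univ m) habs
          have bsubr : ∀ u v w : G, b u (v - w) = b u v - b u w := by
            intro u v w
            rw [sub_eq_add_neg, baddr, bsymm u (-w), bneg, bsymm w u, ← sub_eq_add_neg]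
          have h2 : ∑ t, b (x t) (y t) = b (x i) z - b (x j) z := by
            simp only [hy, bsubr, Finset.sum_sub_distrib, hterm i x, hterm j x]
          rw [h2] at h1
          rw [sub_eq_add_neg, badd, bneg]
          rw [sub_eq_add_neg (b (x i) z) (b (x j) z)] at h1
          exact h1
        have := hnd (x i - x j) (fun z => hz z)
        exact sub_eq_zero.mp this
    refine ⟨x ⟨0, hk⟩, ?_, funext fun i => key i ⟨0, hk⟩⟩
    have hxc : x = fun _ => x ⟨0, hk⟩ := funext fun i => key i ⟨0, hk⟩
    rw [hxc] at hx
    simpa using hx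
  · rintro ⟨a, ha, rfl⟩
    intro y hy
    rw [sumrw]
    simp only [bsumr a Finset.univ y, hy, b0r]
end

section
/- Let (G,q) be a finite abelian group with quadratic form q such that ∂q is non-degenerate. Suppose there exists a ∈ G with ka = 0 and k·q(a) ≠ 0 in ℚ/ℤ. Then Θ(F_k(G), F_k(q)) = 0, where F_k(G) = {(x₁,…,x_k) ∈ G^k : ∑xᵢ = 0}, F_k(q)(x) = ∑ q(xᵢ), and Θ is the normalized Gauss sum. -/
open Classical

theorem stmt14 {G : Type*} [AddCommGroup G] [Fintype G]
    -- `q` is a rational-valued lift of a `ℚ/ℤ`-valued quadratic form: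
    (q : G → ℚ)
    (hq_even : ∀ x : G, ∃ n : ℤ, q (-x) = q x + n)
    (hq_bilin : ∀ x y z : G, ∃ n : ℤ,
      (q (x + z + y) - q (x + z) - q y)
        = (q (x + y) - q x - q y) + (q (z + y) - q z - q y) + n)
    (hnd : ∀ x : G, (∀ y : G, ∃ n : ℤ, q (x + y) - q x - q y = n) → x = 0)
    (k : ℕ) (hk : 1 ≤ k)
    (a : G) (ha : k • a = 0) (hka : ¬ ∃ n : ℤ, (k : ℚ) * q a = n) :
    (Real.sqrt ((Fintype.card G : ℝ) ^ (k - 1)) : ℂ)⁻¹ *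
        ∑ x ∈ Finset.univ.filter (fun x : Fin k → G => ∑ i, x i = 0),
          Complex.exp (2 * Real.pi * Complex.I * ((∑ i, q (x i) : ℚ) : ℂ))
      = 0 := by
  -- q 0 is an integer
  have hq0 : ∃ n : ℤ, q (0 : G) = n := by
    obtain ⟨n, hn⟩ := hq_bilin 0 0 0
    simp only [add_zero, zero_add] at hn
    exact ⟨n, by linarith⟩
  set B : G → ℚ := fun u => q (u + a) - q u - q a with hB
  have hbil : ∀ u v : G, ∃ n : ℤ, B (u + v) = B u + B v + n := by
    intro u v
    obtain ⟨n, hn⟩ := hq_bilin u a v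
    exact ⟨n, by simpa [hB] using hn⟩
  obtain ⟨n0, hn0⟩ := hq0
  have hB0 : B 0 = -(n0 : ℚ) := by
    simp only [hB, zero_add]
    rw [hn0]; ring
  -- sum of B over a zero-sum tuple is an integer
  have hBsum : ∀ x : Fin k → G, ∑ i, x i = 0 → ∃ n : ℤ, ∑ i, B (x i) = n := by
    intro x hx
    have key : ∀ s : Finset (Fin k),
        ∃ n : ℤ, ∑ i ∈ s, B (x i) = B (∑ i ∈ s, x i) + n := by
      intro s
      induction s using Finset.induction with
      | empty => exact ⟨n0, by simp [hB0]⟩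
      | @insert i s' h ih =>
        obtain ⟨n, hn⟩ := ih
        obtain ⟨m, hm⟩ := hbil (x i) (∑ j ∈ s', x j)
        refine ⟨n - m, ?_⟩
        rw [Finset.sum_insert h, Finset.sum_insert h, hn, hm]
        push_cast; ring
    obtain ⟨n, hn⟩ := key Finset.univ
    refine ⟨-n0 + n, ?_⟩
    rw [hn, hx, hB0]
    push_cast; ring
  -- the key shift identity
  have hshift : ∀ x : Fin k → G, ∑ i, x i = 0 →
      ∃ n : ℤ, ∑ i, q (x i + a) = ∑ i, q (x i) + (k : ℚ) * q a + n := by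
    intro x hx
    obtain ⟨n, hn⟩ := hBsum x hx
    refine ⟨n, ?_⟩
    have h1 : ∑ i, q (x i + a) = ∑ i, (B (x i) + q (x i) + q a) := by
      apply Finset.sum_congr rfl
      intro i _
      simp only [hB]; ring
    rw [h1, Finset.sum_add_distrib, Finset.sum_add_distrib, hn, Finset.sum_const,
      Finset.card_univ, Fintype.card_fin, nsmul_eq_mul]
    ring
  set F : Finset (Fin k → G) :=
    Finset.univ.filter (fun x : Fin k → G => ∑ i, x i = 0) with hF
  set S : ℂ := ∑ x ∈ F, Complex.exp (2 * Real.pi * Complex.I * ((∑ i, q (x i) : ℚ) : ℂ))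
    with hS
  set c : ℂ := Complex.exp (2 * Real.pi * Complex.I * (((k : ℚ) * q a : ℚ) : ℂ)) with hc
  have hmem : ∀ x : Fin k → G, x ∈ F ↔ (x - fun _ => a) ∈ F := by
    intro x
    simp only [hF, Finset.mem_filter, Finset.mem_univ, true_and, Pi.sub_apply]
    rw [Finset.sum_sub_distrib, Finset.sum_const, Finset.card_univ, Fintype.card_fin,
      ha, sub_zero]
  -- S = c * S
  have hSc : S = c * S := by
    have h1 : S = ∑ x ∈ F,
        Complex.exp (2 * Real.pi * Complex.I * ((∑ i, q (x i + a) : ℚ) : ℂ)) := by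
      rw [hS]
      refine Finset.sum_equiv (Equiv.subRight (fun _ => a : Fin k → G)) ?_ ?_
      · intro x
        simpa using hmem x
      · intro x hx
        have he : ∀ i, (Equiv.subRight (fun _ => a : Fin k → G)) x i + a = x i := by
          intro i; simp [Equiv.subRight]
        simp only [he]
    have h2 : ∀ x ∈ F,
        Complex.exp (2 * Real.pi * Complex.I * ((∑ i, q (x i + a) : ℚ) : ℂ))
          = c * Complex.exp (2 * Real.pi * Complex.I * ((∑ i, q (x i) : ℚ) : ℂ)) := by
      intro x hx
      have hx0 : ∑ i, x i = 0 := by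
        simpa [hF, Finset.mem_filter] using hx
      obtain ⟨n, hn⟩ := hshift x hx0
      rw [hn, hc, ← Complex.exp_add, Complex.exp_eq_exp_iff_exists_int]
      refine ⟨n, ?_⟩
      push_cast
      ring
    calc S = ∑ x ∈ F,
          Complex.exp (2 * Real.pi * Complex.I * ((∑ i, q (x i + a) : ℚ) : ℂ)) := h1
      _ = ∑ x ∈ F,
          c * Complex.exp (2 * Real.pi * Complex.I * ((∑ i, q (x i) : ℚ) : ℂ)) :=
        Finset.sum_congr rfl h2
      _ = c * S := by rw [hS, Finset.mul_sum]
  have hcne : c ≠ 1 := by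
    intro h
    rw [hc, Complex.exp_eq_one_iff] at h
    obtain ⟨n, hn⟩ := h
    apply hka
    refine ⟨n, ?_⟩
    have h2 : (2 * Real.pi * Complex.I : ℂ) ≠ 0 := by
      simp [Real.pi_ne_zero, Complex.I_ne_zero]
    have : (((k : ℚ) * q a : ℚ) : ℂ) = (n : ℂ) := by
      rw [mul_comm (n : ℂ)] at hn
      exact mul_left_cancel₀ h2 hn
    exact_mod_cast this
  have hS0 : S = 0 := by
    have h : (1 - c) * S = 0 := by rw [sub_mul, one_mul, ← hSc, sub_self]
    rcases mul_eq_zero.mp h with h | h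
    · exact absurd (by linear_combination -h : c = 1) hcne
    · exact h
  rw [hS0, mul_zero]
end

section
/- Let (G,q) be a finite abelian group of odd order with quadratic form q whose associated bilinear form ∂q is non-degenerate. Then for every k ≥ 1, the Gauss sum Θ(F_k(G), F_k(q)) is nonzero, and in fact |Θ(F_k(G), F_k(q))| = |G[k]|^{1/2}, where G[k] = {x ∈ G : kx = 0}. -/
open Classical

noncomputable def Ee (r : ℚ) : ℂ := Complex.exp (2 * Real.pi * Complex.I * (r : ℂ))

lemma Ee_add (r s : ℚ) : Ee (r + s) = Ee r * Ee s := by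
  rw [Ee, Ee, Ee, ← Complex.exp_add]; push_cast; ring_nf

lemma Ee_int (n : ℤ) : Ee (n : ℚ) = 1 := by
  rw [Ee]
  have h : (2 * (Real.pi:ℂ) * Complex.I * (((n:ℚ):ℚ):ℂ)) = (n:ℤ) * (2 * Real.pi * Complex.I) := by
    push_cast; ring
  rw [h, Complex.exp_int_mul_two_pi_mul_I]

lemma Ee_eq_one_iff (r : ℚ) : Ee r = 1 ↔ ∃ n : ℤ, r = n := by
  constructor
  · intro h
    rw [Ee, Complex.exp_eq_one_iff] at h
    obtain ⟨n, hn⟩ := h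
    refine ⟨n, ?_⟩
    have h2 : ((2:ℂ) * Real.pi * Complex.I) ≠ 0 := by
      simp [Real.pi_ne_zero, Complex.I_ne_zero]
    have : ((r:ℂ)) * (2 * Real.pi * Complex.I) = (n:ℂ) * (2 * Real.pi * Complex.I) := by
      rw [← hn]; ring
    have := mul_right_cancel₀ h2 this
    exact_mod_cast this
  · rintro ⟨n, rfl⟩; exact Ee_int n

lemma Ee_abs (r : ℚ) : ‖Ee r‖ = 1 := by
  rw [Ee, Complex.norm_exp]
  have : (2 * (Real.pi:ℂ) * Complex.I * (r:ℂ)).re = 0 := by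
    simp [Complex.mul_re, Complex.mul_im]
  rw [this, Real.exp_zero]

lemma Ee_conj (r : ℚ) : (starRingEnd ℂ) (Ee r) = Ee (-r) := by
  rw [Ee, Ee, ← Complex.exp_conj]
  congr 1
  simp only [map_mul, Complex.conj_I, Complex.conj_ofReal, map_ofNat, map_ratCast]
  push_cast
  ring

lemma Ee_sum {ι : Type*} (s : Finset ι) (f : ι → ℚ) :
    Ee (∑ i ∈ s, f i) = ∏ i ∈ s, Ee (f i) := by
  classical
  induction s using Finset.cons_induction with
  | empty => simp [Ee]
  | cons a s ha ih => rw [Finset.sum_cons, Finset.prod_cons, Ee_add, ih]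


section
variable {G : Type*} [AddCommGroup G] (q : G → ℚ)

/-- the associated bilinear form lift -/
def bb (x y : G) : ℚ := q (x + y) - q x - q y

/-- congruence mod ℤ -/
def IZ (a b : ℚ) : Prop := ∃ n : ℤ, a = b + n

variable {q}

lemma IZ.rfl {a : ℚ} : IZ a a := ⟨0, by simp⟩

lemma IZ.trans {a b c : ℚ} (h1 : IZ a b) (h2 : IZ b c) : IZ a c := by
  obtain ⟨n, hn⟩ := h1; obtain ⟨m, hm⟩ := h2
  exact ⟨m + n, by rw [hn, hm]; push_cast; ring⟩

lemma IZ.add {a b c d : ℚ} (h1 : IZ a b) (h2 : IZ c d) : IZ (a + c) (b + d) := by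
  obtain ⟨n, hn⟩ := h1; obtain ⟨m, hm⟩ := h2
  exact ⟨n + m, by rw [hn, hm]; push_cast; ring⟩

lemma IZ.sum {ι : Type*} {s : Finset ι} {f g : ι → ℚ} (h : ∀ i ∈ s, IZ (f i) (g i)) :
    IZ (∑ i ∈ s, f i) (∑ i ∈ s, g i) := by
  induction s using Finset.cons_induction with
  | empty => exact IZ.rfl
  | cons a s ha ih =>
    rw [Finset.sum_cons, Finset.sum_cons]
    exact (h a (Finset.mem_cons_self a s)).add (ih fun i hi => h i (Finset.mem_cons.mpr (Or.inr hi)))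

lemma Ee_IZ {a b : ℚ} (h : IZ a b) : Ee a = Ee b := by
  obtain ⟨n, hn⟩ := h
  rw [hn, Ee_add, Ee_int, mul_one]

lemma bb_symm (x y : G) : bb q x y = bb q y x := by
  unfold bb; rw [add_comm]; ring

variable (hq_bilin : ∀ x y z : G, ∃ n : ℤ,
      (q (x + z + y) - q (x + z) - q y)
        = (q (x + y) - q x - q y) + (q (z + y) - q z - q y) + n)

include hq_bilin

lemma bb_add_left (x z y : G) : IZ (bb q (x + z) y) (bb q x y + bb q z y) := hq_bilin x y z

lemma q0_int : ∃ n : ℤ, q 0 = n := by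
  obtain ⟨n, hn⟩ := hq_bilin 0 0 0
  simp only [add_zero] at hn
  exact ⟨n, by linarith⟩

lemma bb_zero_left (y : G) : IZ (bb q 0 y) 0 := by
  obtain ⟨n, hn⟩ := q0_int hq_bilin
  exact ⟨-n, by simp [bb, hn]⟩

lemma bb_sum_left {ι : Type*} (s : Finset ι) (f : ι → G) (w : G) :
    IZ (bb q (∑ i ∈ s, f i) w) (∑ i ∈ s, bb q (f i) w) := by
  induction s using Finset.cons_induction with
  | empty => simpa using bb_zero_left hq_bilin w
  | cons a s ha ih =>
    rw [Finset.sum_cons, Finset.sum_cons]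
    exact (bb_add_left hq_bilin _ _ _).trans (IZ.rfl.add ih)

lemma bb_nsmul (c : G) : ∀ n : ℕ, IZ (bb q (n • c) c) (n * bb q c c)
  | 0 => by simpa using bb_zero_left hq_bilin c
  | (n+1) => by
    have h1 : ((n:ℚ)+1) * bb q c c = n * bb q c c + bb q c c := by ring
    have := (bb_add_left hq_bilin (n • c) c c).trans ((bb_nsmul c n).add (IZ.rfl (a := bb q c c)))
    rw [succ_nsmul]
    push_cast
    rw [h1]
    exact this

lemma q_nsmul (c : G) : ∀ n : ℕ, IZ (q (n • c)) (n * q c + (n.choose 2) * bb q c c)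
  | 0 => by
    obtain ⟨j, hj⟩ := q0_int hq_bilin
    exact ⟨j, by simp [hj]⟩
  | (n+1) => by
    have key : q ((n+1) • c) = q (n • c) + q c + bb q (n • c) c := by
      rw [succ_nsmul]; simp [bb]
    have h1 := (q_nsmul c n).add (bb_nsmul hq_bilin c n)
    have h2 : IZ (q ((n+1) • c)) ((n * q c + (n.choose 2) * bb q c c) + n * bb q c c + q c) := by
      rw [key]
      obtain ⟨j, hj⟩ := h1
      exact ⟨j, by linarith⟩
    refine h2.trans ⟨0, ?_⟩
    have hch : ((n+1).choose 2 : ℚ) = (n.choose 2 : ℚ) + n := by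
      rw [show (n+1).choose 2 = n.choose 1 + n.choose 2 from Nat.choose_succ_succ n 1]
      push_cast [Nat.choose_one_right]
      ring
    push_cast [hch]
    ring

end

section
variable {G : Type*} [AddCommGroup G] [Fintype G] {q : G → ℚ}
variable (hq_bilin : ∀ x y z : G, ∃ n : ℤ,
      (q (x + z + y) - q (x + z) - q y)
        = (q (x + y) - q x - q y) + (q (z + y) - q z - q y) + n)

include hq_bilin

/-- For `c` with `k • c = 0` in an odd-order group, `k * q c` is an integer. -/
lemma key_int (hodd : Odd (Fintype.card G)) {k : ℕ} {c : G} (hc : k • c = 0) :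
    ∃ j : ℤ, (k : ℚ) * q c = j := by
  set M := addOrderOf c with hM
  have hMk : M ∣ k := addOrderOf_dvd_of_nsmul_eq_zero hc
  have hMN : M ∣ Fintype.card G := addOrderOf_dvd_card
  have hModd : Odd M := by
    rcases Nat.even_or_odd M with he | ho
    · exfalso
      obtain ⟨d, hd⟩ := hMN
      rcases he with ⟨a, ha⟩
      exact (Nat.not_even_iff_odd.mpr hodd) ⟨a * d, by rw [hd, ha]; ring⟩
    · exact ho
  obtain ⟨a, ha⟩ := hModd
  have hMc : M • c = 0 := addOrderOf_nsmul_eq_zero c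
  -- M * bb c c is an integer
  obtain ⟨j1, hj1⟩ := bb_nsmul hq_bilin c M
  rw [hMc] at hj1
  obtain ⟨n0, hn0⟩ := q0_int hq_bilin
  have hbb : (M:ℚ) * bb q c c = -n0 - j1 := by
    have : bb q 0 c = -q 0 := by simp [bb]
    rw [this, hn0] at hj1
    linarith
  -- M * q c is an integer
  obtain ⟨j2, hj2⟩ := q_nsmul hq_bilin c M
  rw [hMc] at hj2
  have hchN : M.choose 2 = a * M := by
    have h0 : M.choose 2 = M * (M - 1) / 2 := Nat.choose_two_right M
    rw [ha] at h0 ⊢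
    have : (2 * a + 1) * (2 * a + 1 - 1) = (a * (2 * a + 1)) * 2 := by
      simp [Nat.add_sub_cancel]; ring
    rw [h0, this, Nat.mul_div_cancel _ (by norm_num)]
  have hch : (M.choose 2 : ℚ) = a * ((M:ℚ)) := by rw [hchN]; push_cast; ring
  have hMq : (M:ℚ) * q c = n0 - (a * (-n0 - j1)) - j2 := by
    rw [hn0] at hj2
    rw [hch, mul_assoc, hbb] at hj2
    linarith
  obtain ⟨d, hd⟩ := hMk
  refine ⟨d * (n0 - a * (-n0 - j1) - j2), ?_⟩
  rw [hd]
  push_cast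
  rw [mul_comm (M:ℚ) (d:ℚ), mul_assoc, hMq]
  try push_cast
  try ring

/-- character orthogonality -/
lemma orth (hnd : ∀ x : G, (∀ y : G, ∃ n : ℤ, q (x + y) - q x - q y = n) → x = 0)
    (w : G) :
    (∑ x : G, Ee (bb q x w)) = if w = 0 then (Fintype.card G : ℂ) else 0 := by
  rcases eq_or_ne w 0 with rfl | hw
  · simp only [if_pos rfl]
    obtain ⟨n0, hn0⟩ := q0_int hq_bilin
    have : ∀ x : G, Ee (bb q x 0) = 1 := by
      intro x
      have : bb q x 0 = ((-n0 : ℤ) : ℚ) := by simp [bb, hn0]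
      rw [this, Ee_int]
    calc ∑ x : G, Ee (bb q x 0) = ∑ _x : G, (1:ℂ) := Finset.sum_congr rfl (fun x _ => this x)
      _ = (Fintype.card G : ℂ) := by simp
  · rw [if_neg hw]
    have : ¬ (∀ y : G, ∃ n : ℤ, q (w + y) - q w - q y = n) := fun h => hw (hnd w h)
    push_neg at this
    obtain ⟨y, hy⟩ := this
    have h1 : Ee (bb q y w) ≠ 1 := by
      intro h
      obtain ⟨n, hn⟩ := (Ee_eq_one_iff _).mp h
      rw [bb_symm] at hn
      exact hy n hn
    have hstep : Ee (bb q y w) * ∑ x : G, Ee (bb q x w) = ∑ x : G, Ee (bb q x w) := by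
      rw [Finset.mul_sum]
      have h2 : ∀ x : G, Ee (bb q y w) * Ee (bb q x w) = Ee (bb q (y + x) w) := by
        intro x
        rw [← Ee_add]
        exact (Ee_IZ ((bb_add_left hq_bilin y x w))).symm
      simp only [h2]
      exact Fintype.sum_equiv (Equiv.addLeft y) _ _ (fun x => rfl)
    have h3 : (Ee (bb q y w) - 1) * ∑ x : G, Ee (bb q x w) = 0 := by
      rw [sub_mul, hstep, one_mul, sub_self]
    rcases mul_eq_zero.mp h3 with h | h
    · exact absurd (sub_eq_zero.mp h) h1
    · exact h

end

theorem stmt15 {G : Type*} [AddCommGroup G] [Fintype G]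
    (hodd : Odd (Fintype.card G))
    -- `q` is a rational-valued lift of a `ℚ/ℤ`-valued quadratic form:
    (q : G → ℚ)
    (hq_even : ∀ x : G, ∃ n : ℤ, q (-x) = q x + n)
    (hq_bilin : ∀ x y z : G, ∃ n : ℤ,
      (q (x + z + y) - q (x + z) - q y)
        = (q (x + y) - q x - q y) + (q (z + y) - q z - q y) + n)
    (hnd : ∀ x : G, (∀ y : G, ∃ n : ℤ, q (x + y) - q x - q y = n) → x = 0)
    (k : ℕ) (hk : 1 ≤ k) :
    ((Real.sqrt ((Fintype.card G : ℝ) ^ (k - 1)) : ℂ)⁻¹ *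
        ∑ x ∈ Finset.univ.filter (fun x : Fin k → G => ∑ i, x i = 0),
          Complex.exp (2 * Real.pi * Complex.I * ((∑ i, q (x i) : ℚ) : ℂ))) ≠ 0 ∧
    ‖(Real.sqrt ((Fintype.card G : ℝ) ^ (k - 1)) : ℂ)⁻¹ *
        ∑ x ∈ Finset.univ.filter (fun x : Fin k → G => ∑ i, x i = 0),
          Complex.exp (2 * Real.pi * Complex.I * ((∑ i, q (x i) : ℚ) : ℂ))‖
      = Real.sqrt (Fintype.card {x : G // k • x = 0}) := by
  obtain ⟨m, rfl⟩ : ∃ m, k = m + 1 := ⟨k - 1, (Nat.succ_pred_eq_of_pos hk).symm⟩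
  have hq_split : ∀ a b : G, q (a + b) = q a + q b + bb q a b := by
    intro a b; simp [bb]
  set N := Fintype.card G with hN
  have hN0 : 0 < N := Fintype.card_pos
  set Q : (Fin m → G) → ℚ := fun y => (∑ i, q (y i)) + q (-(∑ i, y i)) with hQdef
  set S : ℂ := ∑ x ∈ Finset.univ.filter (fun x : Fin (m+1) → G => ∑ i, x i = 0),
      Complex.exp (2 * Real.pi * Complex.I * ((∑ i, q (x i) : ℚ) : ℂ)) with hSdef
  -- Step A : rewrite S as a sum over (Fin m → G)
  have stepA : S = ∑ y : Fin m → G, Ee (Q y) := by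
    rw [hSdef]
    refine Finset.sum_nbij' (fun x : Fin (m+1) → G => x ∘ Fin.castSucc)
      (fun y : Fin m → G => Fin.snoc y (-(∑ i, y i))) (fun a _ => Finset.mem_univ _)
      ?_ ?_ ?_ ?_
    · intro y _
      simp only [Finset.mem_filter, Finset.mem_univ, true_and]
      rw [Fin.sum_univ_castSucc]
      simp
    · intro x hx
      simp only [Finset.mem_filter, Finset.mem_univ, true_and] at hx
      rw [Fin.sum_univ_castSucc] at hx
      funext i
      show (Fin.snoc (x ∘ Fin.castSucc) (-(∑ i, (x ∘ Fin.castSucc) i)) : Fin (m+1) → G) i = x i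
      refine Fin.lastCases ?_ ?_ i
      · rw [Fin.snoc_last]
        simp only [Function.comp]
        exact (eq_neg_of_add_eq_zero_right hx).symm
      · intro j
        rw [Fin.snoc_castSucc]
        rfl
    · intro y _
      funext i; simp [Fin.snoc_castSucc]
    · intro x hx
      simp only [Finset.mem_filter, Finset.mem_univ, true_and] at hx
      show Ee (∑ i, q (x i)) = Ee (Q (x ∘ Fin.castSucc))
      congr 1
      rw [hQdef]
      simp only [Function.comp]
      rw [Fin.sum_univ_castSucc]
      have hlast : x (Fin.last m) = -(∑ i : Fin m, x (Fin.castSucc i)) := by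
        rw [Fin.sum_univ_castSucc] at hx
        exact eq_neg_of_add_eq_zero_right hx
      rw [hlast]
  -- the inner sum evaluation
  have inner_eval : ∀ z : Fin m → G,
      (∑ y : Fin m → G, Ee (Q (y + z) - Q y)) =
      if (∀ i, z i + (∑ j, z j) = 0) then ((N:ℂ))^m else 0 := by
    intro z
    set t := ∑ j, z j with ht
    have hdec : ∀ y : Fin m → G, Ee (Q (y + z) - Q y)
        = Ee ((∑ i, q (z i)) + q (-t)) * ∏ i, Ee (bb q (y i) (z i + t)) := by
      intro y
      set s := ∑ j, y j with hs
      have hexact : Q (y + z) - Q y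
          = (((∑ i, q (z i)) + q (-t)) + ((∑ i, bb q (y i) (z i)) + bb q (-s) (-t))) := by
        have hsum : (∑ i, (y i + z i)) = s + t := Finset.sum_add_distrib
        simp only [hQdef, Pi.add_apply]
        rw [hsum, neg_add, hq_split (-s) (-t)]
        have : (∑ i, q (y i + z i)) = ∑ i, (q (y i) + q (z i) + bb q (y i) (z i)) :=
          Finset.sum_congr rfl (fun i _ => hq_split (y i) (z i))
        rw [this, Finset.sum_add_distrib, Finset.sum_add_distrib]
        ring
      have hIZ : IZ ((∑ i, bb q (y i) (z i)) + bb q (-s) (-t))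
          (∑ i, bb q (y i) (z i + t)) := by
        -- bb (-s)(-t) ≡ bb s t
        have e1 : IZ (bb q (-s) (-t)) (bb q s t) := by
          obtain ⟨n1, h1⟩ := hq_even (s + t)
          obtain ⟨n2, h2⟩ := hq_even s
          obtain ⟨n3, h3⟩ := hq_even t
          refine ⟨n1 - n2 - n3, ?_⟩
          have : -s + -t = -(s + t) := (neg_add s t).symm
          rw [bb, bb, this, h1, h2, h3]
          push_cast
          ring
        have e2 : IZ (bb q s t) (∑ i, bb q (y i) t) := bb_sum_left hq_bilin _ _ _
        have e3 : IZ ((∑ i, bb q (y i) (z i)) + (∑ i, bb q (y i) t))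
            (∑ i, bb q (y i) (z i + t)) := by
          rw [← Finset.sum_add_distrib]
          refine IZ.sum (fun i _ => ?_)
          have := bb_add_left hq_bilin (z i) t (y i)
          obtain ⟨n, hn⟩ := this
          exact ⟨-n, by rw [bb_symm (y i) (z i), bb_symm (y i) t,
            bb_symm (y i) (z i + t)]; rw [hn]; push_cast; ring⟩
        exact ((IZ.rfl.add (e1.trans e2)).trans e3)
      rw [hexact, Ee_add, Ee_IZ hIZ, Ee_sum]
    simp only [hdec]
    rw [← Finset.mul_sum]
    rw [← Fintype.prod_sum (fun (i : Fin m) (x : G) => Ee (bb q x (z i + t)))]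
    have horth : ∀ i : Fin m, (∑ x : G, Ee (bb q x (z i + t)))
        = if z i + t = 0 then (N:ℂ) else 0 := fun i => orth hq_bilin hnd (z i + t)
    by_cases hz : ∀ i, z i + t = 0
    · rw [if_pos hz]
      have hprod : (∏ i : Fin m, ∑ x : G, Ee (bb q x (z i + t))) = (N:ℂ)^m := by
        rw [Finset.prod_congr rfl (fun i _ => by rw [horth i, if_pos (hz i)])]
        simp
      rw [hprod]
      -- Ee of the constant term is 1
      have hzc : ∀ i, z i = -t := fun i => eq_neg_of_add_eq_zero_left (hz i)
      have htm : t = m • (-t) := by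
        rw [ht]
        calc (∑ j, z j) = ∑ _j : Fin m, -t := Finset.sum_congr rfl (fun j _ => hzc j)
        _ = m • (-t) := by simp
      have hc : (m + 1) • (-t) = 0 := by
        rw [succ_nsmul, ← htm, add_neg_cancel]
      obtain ⟨j, hj⟩ := key_int hq_bilin hodd hc
      have hCz : (∑ i, q (z i)) + q (-t) = (j : ℚ) := by
        rw [← hj]
        calc (∑ i, q (z i)) + q (-t)
            = (∑ _i : Fin m, q (-t)) + q (-t) :=
              by rw [Finset.sum_congr rfl (fun i _ => by rw [hzc i])]
          _ = ((m:ℚ) + 1) * q (-t) := by rw [Finset.sum_const]; push_cast; simp; ring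
          _ = ((m+1 : ℕ):ℚ) * q (-t) := by push_cast; ring
      rw [hCz, Ee_int, one_mul]
    · rw [if_neg hz]
      push_neg at hz
      obtain ⟨i, hi⟩ := hz
      have : (∏ i : Fin m, ∑ x : G, Ee (bb q x (z i + t))) = 0 :=
        Finset.prod_eq_zero (Finset.mem_univ i) (by rw [horth i, if_neg hi])
      rw [this, mul_zero]
  -- Step B : S * conj S
  set T := Fintype.card {c : G // (m+1) • c = 0} with hT
  have stepB : S * (starRingEnd ℂ) S = (N:ℂ)^m * (T:ℂ) := by
    rw [stepA, map_sum]
    have hc : ∀ y : Fin m → G, (starRingEnd ℂ) (Ee (Q y)) = Ee (-(Q y)) :=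
      fun y => Ee_conj _
    simp only [hc]
    rw [Finset.sum_mul_sum]
    have h1 : ∀ y y' : Fin m → G, Ee (Q y) * Ee (-(Q y')) = Ee (Q y - Q y') := by
      intro y y'; rw [← Ee_add]; congr 1; ring
    simp only [h1]
    rw [Finset.sum_comm]
    have h2 : ∀ y' : Fin m → G, (∑ y : Fin m → G, Ee (Q y - Q y'))
        = ∑ z : Fin m → G, Ee (Q (y' + z) - Q y') := by
      intro y'
      exact (Fintype.sum_equiv (Equiv.addLeft y') _ _ (fun z => rfl)).symm
    simp only [h2]
    rw [Finset.sum_comm]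
    have h3 : ∀ z y' : Fin m → G, Q (y' + z) = Q (y' + z) := fun _ _ => rfl
    have h4 : ∀ z : Fin m → G, (∑ y' : Fin m → G, Ee (Q (y' + z) - Q y'))
        = if (∀ i, z i + (∑ j, z j) = 0) then ((N:ℂ))^m else 0 := inner_eval
    simp only [h4]
    rw [← Finset.sum_filter]
    rw [Finset.sum_const]
    have hcard : (Finset.univ.filter
        (fun z : Fin m → G => ∀ i, z i + (∑ j, z j) = 0)).card = T := by
      rw [hT, Fintype.card_subtype]
      refine Finset.card_nbij' (fun z : Fin m → G => -(∑ j, z j)) (fun c _ => c) ?_ ?_ ?_ ?_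
      · intro z hz
        simp only [Finset.mem_coe, Finset.mem_filter, Finset.mem_univ, true_and] at hz ⊢
        have htm : (∑ j, z j) = m • (-(∑ j, z j)) := by
          calc (∑ j, z j) = ∑ _j : Fin m, -(∑ j, z j) :=
                Finset.sum_congr rfl (fun j _ => eq_neg_of_add_eq_zero_left (hz j))
            _ = m • (-(∑ j, z j)) := by simp
        rw [succ_nsmul, ← htm, add_neg_cancel]
      · intro c hc
        simp only [Finset.mem_coe, Finset.mem_filter, Finset.mem_univ, true_and] at hc ⊢
        intro i
        have : (∑ _j : Fin m, c) = m • c := by simp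
        rw [this, ← succ_nsmul', hc]
      · intro z hz
        simp only [Finset.mem_coe, Finset.mem_filter, Finset.mem_univ, true_and] at hz
        funext i
        exact (eq_neg_of_add_eq_zero_left (hz i)).symm
      · intro c hc
        simp only [Finset.mem_coe, Finset.mem_filter, Finset.mem_univ, true_and] at hc
        show -(∑ _j : Fin m, c) = c
        have : (∑ _j : Fin m, c) = m • c := by simp
        rw [this, neg_eq_iff_add_eq_zero, ← succ_nsmul, hc]
    rw [hcard, nsmul_eq_mul, mul_comm]
  -- final computations
  have hnormSq : Complex.normSq S = (N:ℝ)^m * (T:ℝ) := by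
    rw [Complex.mul_conj] at stepB
    exact_mod_cast stepB
  have habsS : ‖S‖ = Real.sqrt ((N:ℝ)^m) * Real.sqrt (T:ℝ) := by
    rw [Complex.norm_def, hnormSq, Real.sqrt_mul (by positivity)]
  have hTpos : 0 < T := by
    rw [hT]
    exact Fintype.card_pos_iff.mpr ⟨⟨0, smul_zero _⟩⟩
  have hsq_pos : (0:ℝ) < Real.sqrt ((N:ℝ)^m) := Real.sqrt_pos.mpr (by positivity)
  have hmain : ‖(Real.sqrt ((N : ℝ) ^ (m + 1 - 1)) : ℂ)⁻¹ * S‖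
      = Real.sqrt (T:ℝ) := by
    rw [norm_mul, norm_inv, Complex.norm_real, Real.norm_eq_abs, abs_of_nonneg (Real.sqrt_nonneg _), habsS]
    simp only [Nat.add_sub_cancel]
    rw [inv_mul_cancel_left₀ (ne_of_gt hsq_pos)]
  refine ⟨?_, hmain⟩
  intro h0
  rw [h0, norm_zero] at hmain
  have : (0:ℝ) < Real.sqrt (T:ℝ) := Real.sqrt_pos.mpr (by exact_mod_cast hTpos)
  linarith
end

section
/- Let A, B, C be odd integers and n ≥ 1. Then there exists a 2×2 integer matrix S = (s_{ij}) with S ≡ I mod 2 such that s₁₁² + s₁₁s₁₂ + s₁₂² ≡ A, 2s₁₁s₂₁ + s₁₁s₂₂ + s₂₁s₁₂ + 2s₁₂s₂₂ ≡ B, and s₂₁² + s₂₁s₂₂ + s₂₂² ≡ C, all modulo 2^n. (Equivalently, the quadratic form x₁² + x₁x₂ + x₂² transforms into Ax₁² + Bx₁x₂ + Cx₂² modulo 2^n under the substitution (x₁,x₂) ↦ (x₁,x₂)S.) -/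
theorem stmt17 (A B C : ℤ) (hA : Odd A) (hB : Odd B) (hC : Odd C) (n : ℕ) (hn : 1 ≤ n) :
    ∃ s₁₁ s₁₂ s₂₁ s₂₂ : ℤ,
      s₁₁ ≡ 1 [ZMOD 2] ∧ s₁₂ ≡ 0 [ZMOD 2] ∧ s₂₁ ≡ 0 [ZMOD 2] ∧ s₂₂ ≡ 1 [ZMOD 2] ∧
      s₁₁ ^ 2 + s₁₁ * s₁₂ + s₁₂ ^ 2 ≡ A [ZMOD 2 ^ n] ∧
      2 * s₁₁ * s₂₁ + s₁₁ * s₂₂ + s₂₁ * s₁₂ + 2 * s₁₂ * s₂₂ ≡ B [ZMOD 2 ^ n] ∧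
      s₂₁ ^ 2 + s₂₁ * s₂₂ + s₂₂ ^ 2 ≡ C [ZMOD 2 ^ n] := by
  induction n, hn using Nat.le_induction with
  | base =>
    obtain ⟨a, ha⟩ := hA
    obtain ⟨b, hb⟩ := hB
    obtain ⟨c, hc⟩ := hC
    refine ⟨1, 0, 0, 1, Int.ModEq.refl 1, Int.ModEq.refl 0, Int.ModEq.refl 0,
      Int.ModEq.refl 1, ?_, ?_, ?_⟩ <;>
      [exact Int.modEq_iff_dvd.mpr ⟨a, by omega⟩;
       exact Int.modEq_iff_dvd.mpr ⟨b, by omega⟩;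
       exact Int.modEq_iff_dvd.mpr ⟨c, by omega⟩]
  | succ k hk ih =>
    obtain ⟨a, b, c, d, h1, h2, h3, h4, hQA, hQB, hQC⟩ := ih
    obtain ⟨α, hα⟩ := h1.dvd  -- 1 - a = 2 * α
    obtain ⟨β, hβ⟩ := h2.dvd  -- 0 - b = 2 * β
    obtain ⟨γ, hγ⟩ := h3.dvd  -- 0 - c = 2 * γ
    obtain ⟨δ, hδ⟩ := h4.dvd  -- 1 - d = 2 * δ
    have ha : a = 1 - 2 * α := by omega
    have hb : b = -(2 * β) := by omega
    have hc : c = -(2 * γ) := by omega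
    have hd : d = 1 - 2 * δ := by omega
    subst ha hb hc hd
    obtain ⟨eA, heA⟩ := hQA.dvd  -- A - old = 2^k * eA
    obtain ⟨eB, heB⟩ := hQB.dvd
    obtain ⟨eC, heC⟩ := hQC.dvd
    obtain ⟨m, hm⟩ : ∃ m : ℕ, k = m + 1 := ⟨k - 1, by omega⟩
    subst hm
    set K : ℤ := 2 ^ m with hK
    have hP : (2 : ℤ) ^ (m + 1) = 2 * K := by rw [hK]; ring
    have hP2 : (2 : ℤ) ^ (m + 1 + 1) = 4 * K := by rw [hK]; ring
    rw [hP] at heA heB heC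
    refine ⟨(1 - 2 * α) + 2 * K * eB, -(2 * β) + 2 * K * eA, -(2 * γ) + 2 * K * eC,
      1 - 2 * δ, ?_, ?_, ?_, h4, ?_, ?_, ?_⟩
    · exact Int.modEq_iff_dvd.mpr ⟨α - K * eB, by ring⟩
    · exact Int.modEq_iff_dvd.mpr ⟨β - K * eA, by ring⟩
    · exact Int.modEq_iff_dvd.mpr ⟨γ - K * eC, by ring⟩
    · rw [Int.modEq_iff_dvd, hP2]
      refine ⟨-eB - eB^2*K - eA*eB*K - eA^2*K + β*eB + 2*β*eA + 2*α*eB + α*eA, ?_⟩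
      linear_combination heA
    · rw [Int.modEq_iff_dvd, hP2]
      refine ⟨-eC - 2*eB*eC*K - eA - eA*eC*K + δ*eB + 2*δ*eA + 2*γ*eB + γ*eA
        + β*eC + 2*α*eC, ?_⟩
      linear_combination heB
    · rw [Int.modEq_iff_dvd, hP2]
      refine ⟨-eC^2*K + δ*eC + 2*γ*eC, ?_⟩
      linear_combination heC
end

section
/- Let A, B, C be integers with B odd and A·C even, and let n ≥ 1. Then there exists a 2×2 integer matrix S = (s_{ij}) with S ≡ [[A,1],[1,C]] mod 2 such that s₁₁s₁₂ ≡ A, s₁₁s₂₂ + s₂₁s₁₂ ≡ B, and s₂₁s₂₂ ≡ C, all modulo 2^n. -/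
lemma even_two_pow' {m : ℕ} (h : 1 ≤ m) : Even ((2:ℤ) ^ m) := by
  obtain ⟨k, rfl⟩ := Nat.exists_eq_add_of_le h
  exact ⟨2 ^ k, by rw [pow_add, pow_one]; ring⟩

lemma root_exists (A B C : ℤ) (hB : Odd B) (hAC : Even (A * C)) :
    ∀ n : ℕ, ∃ x : ℤ, Odd x ∧ (2 : ℤ) ^ n ∣ x ^ 2 - B * x + A * C := by
  intro n
  induction n with
  | zero => exact ⟨1, odd_one, one_dvd _⟩
  | succ n ih =>
    obtain ⟨x, hx, hd⟩ := ih
    obtain ⟨k, hk⟩ := hd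
    rcases Int.even_or_odd k with hke | hko
    · refine ⟨x, hx, ?_⟩
      obtain ⟨m, hm⟩ := hke
      exact ⟨m, by rw [hk, hm]; ring⟩
    · rcases Nat.eq_zero_or_pos n with rfl | hn
      · exfalso
        have hkeven : Even k := by
          have h1 : Even (x - B) := hx.sub_odd hB
          have h2 : Even (x * (x - B) + A * C) := (h1.mul_left x).add hAC
          have h3 : k = x * (x - B) + A * C := by
            rw [pow_zero, one_mul] at hk; rw [← hk]; ring
          rwa [h3]
        exact (Int.not_even_iff_odd.mpr hko) hkeven
      · refine ⟨x + 2 ^ n, by simpa using hx.add_even (even_two_pow' hn), ?_⟩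
        have heq : (x + 2 ^ n) ^ 2 - B * (x + 2 ^ n) + A * C
            = 2 ^ n * (k + (2 * x - B) + 2 ^ n) := by
          linear_combination hk
        rw [heq]
        have h1 : Even (k + (2 * x - B) + 2 ^ n) := by
          have h3 : Even (k + (2 * x - B)) := by
            rcases hko with ⟨a, ha⟩; rcases hB with ⟨b, hb⟩
            exact ⟨a + x - b, by omega⟩
          exact h3.add (even_two_pow' hn)
        obtain ⟨m, hm⟩ := h1
        exact ⟨m, by rw [hm]; ring⟩

theorem stmt18 (A B C : ℤ) (hB : Odd B) (hAC : Even (A * C)) (n : ℕ) (hn : 1 ≤ n) :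
    ∃ s₁₁ s₁₂ s₂₁ s₂₂ : ℤ,
      s₁₁ ≡ A [ZMOD 2] ∧ s₁₂ ≡ 1 [ZMOD 2] ∧ s₂₁ ≡ 1 [ZMOD 2] ∧ s₂₂ ≡ C [ZMOD 2] ∧
      s₁₁ * s₁₂ ≡ A [ZMOD 2 ^ n] ∧
      s₁₁ * s₂₂ + s₂₁ * s₁₂ ≡ B [ZMOD 2 ^ n] ∧
      s₂₁ * s₂₂ ≡ C [ZMOD 2 ^ n] := by
  obtain ⟨x, hx, hroot⟩ := root_exists A B C hB hAC n
  obtain ⟨a, ha⟩ := hx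
  have hcop : IsCoprime x ((2 : ℤ) ^ n) :=
    IsCoprime.pow_right ⟨1, -a, by rw [ha]; ring⟩
  obtain ⟨u, v, huv⟩ := id hcop
  have hinv : x * u ≡ 1 [ZMOD 2 ^ n] := by
    rw [Int.modEq_iff_dvd]
    exact ⟨v, by linarith [mul_comm x u]⟩
  have hu : Odd u := by
    have hux : Odd (u * x) := by
      have he : u * x = 1 - v * 2 ^ n := by linarith
      rw [he]
      exact Odd.sub_even odd_one (Even.mul_left (even_two_pow' hn) _)
    exact (Int.odd_mul.mp hux).1
  obtain ⟨b, hb⟩ := hu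
  refine ⟨A * u, x, 1, C, ?_, ?_, ?_, ?_, ?_, ?_, ?_⟩
  · rw [Int.modEq_iff_dvd]
    exact ⟨-A * b, by rw [hb]; ring⟩
  · rw [Int.modEq_iff_dvd]
    exact ⟨-a, by omega⟩
  · rfl
  · rfl
  · calc A * u * x = A * (x * u) := by ring
      _ ≡ A * 1 [ZMOD 2 ^ n] := hinv.mul_left A
      _ = A := by ring
  · have key : (A * u * C + 1 * x) * x ≡ B * x [ZMOD 2 ^ n] := by
      have h1 : (A * u * C + 1 * x) * x = A * C * (x * u) + x ^ 2 := by ring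
      rw [h1]
      calc A * C * (x * u) + x ^ 2
          ≡ A * C * 1 + x ^ 2 [ZMOD 2 ^ n] := (hinv.mul_left (A*C)).add_right _
        _ ≡ B * x [ZMOD 2 ^ n] := by
            rw [Int.modEq_iff_dvd]
            obtain ⟨m, hm⟩ := hroot
            exact ⟨-m, by linear_combination -hm⟩
    have hc := key.cancel_right_div_gcd (a := A * u * C + 1 * x) (b := B)
      (by positivity)
    rwa [Int.isCoprime_iff_gcd_eq_one.mp hcop.symm, Nat.cast_one, Int.ediv_one] at hc
  · rw [one_mul]
end

section
/- Let G be a finite abelian group of exponent e, and write G = ⊕ₖ ⟨eₖ⟩ as a direct sum of cyclic groups generated by e₁,…,e_n. Let f₁,…,f_n ∈ G with order(fₖ) = order(eₖ) for all k, such that f₁,…,f_n generate G. Then there exists an automorphism φ of G with φ(eₖ) = fₖ for all k; in particular, G = ⊕ₖ ⟨fₖ⟩. -/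
section Aux

variable {G : Type*} [AddCommGroup G]

/-- If every integer killing `a` kills `b`, then `k • a = k' • a → k • b = k' • b`. -/
private lemma smul_transfer {a b : G} (h : (addOrderOf a : ℤ) • b = 0)
    {k k' : ℤ} (hk : k • a = k' • a) : k • b = k' • b := by
  have h1 : (k - k') • a = 0 := by rw [sub_smul, hk, sub_self]
  obtain ⟨m, hm⟩ := addOrderOf_dvd_iff_zsmul_eq_zero.mpr h1
  have : (k - k') • b = 0 := by
    rw [hm, mul_smul]
    rw [smul_comm]
    rw [h, smul_zero]
  have := sub_eq_zero.mp (by rwa [sub_smul] at this)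
  exact this

/-- The hom `zmultiples a →+ G` sending `k • a` to `k • b`, well-defined when
`addOrderOf a • b = 0`. -/
private noncomputable def myLift (a b : G) (h : (addOrderOf a : ℤ) • b = 0) :
    AddSubgroup.zmultiples a →+ G where
  toFun x := (AddSubgroup.mem_zmultiples_iff.mp x.2).choose • b
  map_zero' := by
    have hs := (AddSubgroup.mem_zmultiples_iff.mp
      (0 : AddSubgroup.zmultiples a).2).choose_spec
    have h0 : (AddSubgroup.mem_zmultiples_iff.mp
        (0 : AddSubgroup.zmultiples a).2).choose • a = (0 : ℤ) • a := by
      rw [hs]; simp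
    simpa using smul_transfer h h0
  map_add' x y := by
    have hx := (AddSubgroup.mem_zmultiples_iff.mp x.2).choose_spec
    have hy := (AddSubgroup.mem_zmultiples_iff.mp y.2).choose_spec
    have hxy := (AddSubgroup.mem_zmultiples_iff.mp (x + y).2).choose_spec
    show (AddSubgroup.mem_zmultiples_iff.mp (x + y).2).choose • b =
      (AddSubgroup.mem_zmultiples_iff.mp x.2).choose • b +
      (AddSubgroup.mem_zmultiples_iff.mp y.2).choose • b
    have heq : (AddSubgroup.mem_zmultiples_iff.mp (x + y).2).choose • a =
        ((AddSubgroup.mem_zmultiples_iff.mp x.2).choose +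
        (AddSubgroup.mem_zmultiples_iff.mp y.2).choose) • a := by
      rw [hxy, add_smul, hx, hy]; rfl
    rw [smul_transfer h heq, add_smul]

private lemma myLift_apply_self (a b : G) (h : (addOrderOf a : ℤ) • b = 0) :
    myLift a b h ⟨a, AddSubgroup.mem_zmultiples a⟩ = b := by
  have hs := (AddSubgroup.mem_zmultiples_iff.mp
    (⟨a, AddSubgroup.mem_zmultiples a⟩ : AddSubgroup.zmultiples a).2).choose_spec
  have h1 : (AddSubgroup.mem_zmultiples_iff.mp
      (⟨a, AddSubgroup.mem_zmultiples a⟩ : AddSubgroup.zmultiples a).2).choose • a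
      = (1 : ℤ) • a := by rw [hs]; simp
  have h2 := smul_transfer h h1
  simp only [one_smul] at h2
  exact h2

private lemma myLift_mem (a b : G) (h : (addOrderOf a : ℤ) • b = 0)
    (x : AddSubgroup.zmultiples a) : myLift a b h x ∈ AddSubgroup.zmultiples b :=
  ⟨_, rfl⟩

private lemma myLift_spec (a b : G) (h : (addOrderOf a : ℤ) • b = 0)
    (x : AddSubgroup.zmultiples a) :
    ∃ k : ℤ, k • a = (x : G) ∧ k • b = myLift a b h x :=
  ⟨_, (AddSubgroup.mem_zmultiples_iff.mp x.2).choose_spec, rfl⟩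

end Aux

theorem stmt19 {G : Type*} [AddCommGroup G] [Fintype G] (n : ℕ)
    (e f : Fin n → G)
    (hdecomp : DirectSum.IsInternal (fun i : Fin n => AddSubgroup.zmultiples (e i)))
    (horder : ∀ i, addOrderOf (f i) = addOrderOf (e i))
    (hgen : AddSubgroup.closure (Set.range f) = ⊤) :
    (∃ φ : G ≃+ G, ∀ i, φ (e i) = f i) ∧
    DirectSum.IsInternal (fun i : Fin n => AddSubgroup.zmultiples (f i)) := by
  set A := fun i : Fin n => AddSubgroup.zmultiples (e i) with hA
  set B := fun i : Fin n => AddSubgroup.zmultiples (f i) with hB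
  have hkill : ∀ i, (addOrderOf (e i) : ℤ) • f i = 0 := fun i => by
    rw [natCast_zsmul, ← horder i, addOrderOf_nsmul_eq_zero]
  -- the equivalence from the internal direct sum decomposition
  let Φ : DirectSum (Fin n) (fun i => A i) ≃+ G :=
    AddEquiv.ofBijective (DirectSum.coeAddMonoidHom A) hdecomp
  have hΦ : ∀ (i) (x : A i), Φ (DirectSum.of (fun i => A i) i x) = (x : G) := fun i x =>
    DirectSum.coeAddMonoidHom_of A i x
  -- component homs
  let c : ∀ i, A i →+ G := fun i => myLift (e i) (f i) (hkill i)
  let ψ : G →+ G := (DirectSum.toAddMonoid c).comp Φ.symm.toAddMonoidHom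
  have hψe : ∀ i, ψ (e i) = f i := by
    intro i
    have h1 : Φ.symm (e i) = DirectSum.of (fun i => A i) i
        ⟨e i, AddSubgroup.mem_zmultiples (e i)⟩ := by
      rw [AddEquiv.symm_apply_eq, hΦ]
    show DirectSum.toAddMonoid c (Φ.symm (e i)) = f i
    rw [h1, DirectSum.toAddMonoid_of]
    exact myLift_apply_self _ _ _
  -- ψ is surjective
  have hsurj : Function.Surjective ψ := by
    have hle : (⊤ : AddSubgroup G) ≤ ψ.range := by
      rw [← hgen]
      refine AddSubgroup.closure_le _ |>.mpr ?_
      rintro _ ⟨i, rfl⟩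
      exact ⟨e i, hψe i⟩
    intro g
    exact hle (AddSubgroup.mem_top g)
  have hbij : Function.Bijective ψ := ⟨Finite.injective_iff_surjective.mpr hsurj, hsurj⟩
  let φ : G ≃+ G := AddEquiv.ofBijective ψ hbij
  refine ⟨⟨φ, hψe⟩, ?_⟩
  -- component homs into B i
  have hmem : ∀ (i) (x : A i), c i x ∈ B i := fun i x => myLift_mem _ _ _ x
  let c' : ∀ i, A i →+ B i := fun i => (c i).codRestrict (B i) (hmem i)
  -- each c' i is bijective
  have hc'bij : ∀ i, Function.Bijective (c' i) := by
    intro i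
    constructor
    · intro x y hxy
      obtain ⟨k, hk1, hk2⟩ := myLift_spec (e i) (f i) (hkill i) x
      obtain ⟨l, hl1, hl2⟩ := myLift_spec (e i) (f i) (hkill i) y
      have : k • f i = l • f i := by
        have := congrArg (Subtype.val) hxy
        simp only [c', AddMonoidHom.codRestrict_apply] at this
        rw [hk2, hl2]; exact this
      have hke : k • e i = l • e i := by
        have h1 : (k - l) • f i = 0 := by rw [sub_smul, this, sub_self]
        have h2 : (addOrderOf (f i) : ℤ) ∣ (k - l) :=
          addOrderOf_dvd_iff_zsmul_eq_zero.mpr h1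
        rw [horder i] at h2
        have h3 : (k - l) • e i = 0 :=
          addOrderOf_dvd_iff_zsmul_eq_zero.mp h2
        have := sub_eq_zero.mp (by rwa [sub_smul] at h3)
        exact this
      ext
      rw [← hk1, ← hl1, hke]
    · rintro ⟨y, hy⟩
      obtain ⟨k, hk⟩ := AddSubgroup.mem_zmultiples_iff.mp hy
      refine ⟨⟨k • e i, AddSubgroup.zsmul_mem _ (AddSubgroup.mem_zmultiples (e i)) k⟩, ?_⟩
      ext
      obtain ⟨l, hl1, hl2⟩ := myLift_spec (e i) (f i) (hkill i)
        ⟨k • e i, AddSubgroup.zsmul_mem _ (AddSubgroup.mem_zmultiples (e i)) k⟩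
      show c i _ = y
      rw [← hl2, ← hk]
      exact smul_transfer (hkill i) hl1
  -- the transfer map T
  let T : DirectSum (Fin n) (fun i => A i) →+ DirectSum (Fin n) (fun i => B i) :=
    DirectSum.toAddMonoid fun i => (DirectSum.of (fun i => B i) i).comp (c' i)
  have hT : ∀ (i) (x : A i), T (DirectSum.of (fun i => A i) i x) =
      DirectSum.of (fun i => B i) i (c' i x) := fun i x => by
    simp only [T]
    exact DirectSum.toAddMonoid_of
      (fun j => (DirectSum.of (fun j => ↥(B j)) j).comp (c' j)) i x
  -- key commutation: coeB ∘ T = ψ ∘ coeA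
  have hcomm : ∀ x, DirectSum.coeAddMonoidHom B (T x) = ψ (DirectSum.coeAddMonoidHom A x) := by
    intro x
    induction x using DirectSum.induction_on with
    | zero => simp
    | of i x =>
      rw [hT, DirectSum.coeAddMonoidHom_of, DirectSum.coeAddMonoidHom_of]
      show _ = DirectSum.toAddMonoid c (Φ.symm (x : G))
      have : Φ.symm (x : G) = DirectSum.of (fun i => A i) i x := by
        rw [AddEquiv.symm_apply_eq, hΦ]
      rw [this, DirectSum.toAddMonoid_of]
      rfl
    | add x y hx hy => simp [map_add, hx, hy]
  -- T is surjective
  have hTsurj : Function.Surjective T := by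
    intro y
    induction y using DirectSum.induction_on with
    | zero => exact ⟨0, map_zero T⟩
    | of i x =>
      obtain ⟨z, hz⟩ := (hc'bij i).2 x
      exact ⟨DirectSum.of (fun i => A i) i z, by rw [hT, hz]⟩
    | add x y hx hy =>
      obtain ⟨z, hz⟩ := hx
      obtain ⟨w, hw⟩ := hy
      exact ⟨z + w, by rw [map_add, hz, hw]⟩
  -- conclude
  have hcomp : Function.Bijective (fun x => ψ (DirectSum.coeAddMonoidHom A x)) :=
    hbij.comp hdecomp
  constructor
  · intro y y' hyy
    obtain ⟨z, rfl⟩ := hTsurj y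
    obtain ⟨z', rfl⟩ := hTsurj y'
    rw [hcomm, hcomm] at hyy
    rw [hcomp.1 hyy]
  · intro g
    obtain ⟨z, hz⟩ := hcomp.2 g
    exact ⟨T z, by rw [hcomm]; exact hz⟩
end
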